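/- arXiv:2212.04695 — 9 statements merged into one kernel-verified Lean document; each statement's English description precedes it below -/
import Mathlib

section
/- The power graph of a finite group G is complete if and only if G is cyclic of order 1 or p^m for some prime p and natural number m. -/
/-- The power graph of a group: distinct `x, y` adjacent iff one generates a
subgroup containing the other. -/
def powerGraph (G : Type*) [Group G] : SimpleGraph G where
  Adj x y := x ≠ y ∧ (x ∈ Subgroup.zpowers y ∨ y ∈ Subgroup.zpowers x)
  symm := ⟨fun x y h => ⟨h.1.symm, h.2.symm⟩⟩
  loopless := ⟨fun x h => h.1 rfl⟩

/-- The proper power graph: the power graph with the identity vertex removed. -/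
def properPowerGraph (G : Type*) [Group G] : SimpleGraph {g : G // g ≠ 1} :=
  (powerGraph G).induce {g : G | g ≠ 1}

/-- The tree-number (complexity): number of spanning trees of a graph. -/
noncomputable def SimpleGraph.treeNumber {V : Type*} (Γ : SimpleGraph V) : ℕ :=
  Nat.card {H : Γ.Subgraph // H.IsSpanning ∧ H.coe.IsTree}

open Subgroup Finset

/-- In a finite cyclic group, if `orderOf x ∣ orderOf y` then `x ∈ zpowers y`. -/
lemma mem_zpowers_of_orderOf_dvd {G : Type*} [Group G] [Fintype G] [IsCyclic G]
    {x y : G} (h : orderOf x ∣ orderOf y) : x ∈ Subgroup.zpowers y := by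
  classical
  have hy : 0 < orderOf y := orderOf_pos y
  have hle : #(univ.filter fun a : G => a ^ orderOf y = 1) ≤ orderOf y :=
    IsCyclic.card_pow_eq_one_le hy
  have hsub : (zpowers y : Set G).toFinset ⊆ univ.filter fun a : G => a ^ orderOf y = 1 := by
    intro a ha
    simp only [Set.mem_toFinset, SetLike.mem_coe] at ha
    obtain ⟨k, rfl⟩ := ha
    simp only [Finset.mem_filter, Finset.mem_univ, true_and]
    rw [← zpow_natCast, ← zpow_mul, mul_comm, zpow_mul, zpow_natCast, pow_orderOf_eq_one,
      one_zpow]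
  have hcard : #(zpowers y : Set G).toFinset = orderOf y := by
    rw [Set.toFinset_card]; exact Fintype.card_zpowers
  have heq : (zpowers y : Set G).toFinset = univ.filter fun a : G => a ^ orderOf y = 1 :=
    Finset.eq_of_subset_of_card_le hsub (by rw [hcard]; exact hle)
  have hx : x ∈ univ.filter fun a : G => a ^ orderOf y = 1 := by
    simp only [Finset.mem_filter, Finset.mem_univ, true_and]
    exact orderOf_dvd_iff_pow_eq_one.mp h
  rw [← heq, Set.mem_toFinset] at hx
  exact hx

/-- The power graph of a finite group `G` is complete iff `G` is cyclic of order `1`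
or `p ^ m` for some prime `p` and natural number `m`. -/
theorem powerGraph_complete_iff (G : Type*) [Group G] [Fintype G] :
    powerGraph G = ⊤ ↔
      IsCyclic G ∧ (Fintype.card G = 1 ∨
        ∃ p m : ℕ, p.Prime ∧ Fintype.card G = p ^ m) := by
  constructor
  · intro h
    have hadj : ∀ x y : G, x ≠ y → x ∈ zpowers y ∨ y ∈ zpowers x := by
      intro x y hxy
      have : (powerGraph G).Adj x y := by rw [h]; exact hxy
      exact this.2
    obtain ⟨x, -, hx⟩ := Finset.exists_max_image (Finset.univ : Finset G) orderOf
      ⟨1, Finset.mem_univ 1⟩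
    have hcyc : IsCyclic G := by
      refine ⟨x, fun y => ?_⟩
      show y ∈ zpowers x
      by_cases hxy : y = x
      · subst hxy; exact Subgroup.mem_zpowers y
      rcases hadj y x hxy with hy | hx2
      · exact hy
      · have h1 : zpowers x ≤ zpowers y := Subgroup.zpowers_le.mpr hx2
        have h2 : Nat.card (zpowers y) ≤ Nat.card (zpowers x) := by
          rw [Nat.card_zpowers, Nat.card_zpowers]; exact hx y (Finset.mem_univ y)
        have heq := Subgroup.eq_of_le_of_card_ge h1 h2
        rw [heq]; exact Subgroup.mem_zpowers y
    refine ⟨hcyc, ?_⟩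
    by_cases h1 : Fintype.card G = 1
    · exact Or.inl h1
    right
    have hpp : IsPrimePow (Fintype.card G) := by
      rw [isPrimePow_iff_unique_prime_dvd]
      refine ⟨(Fintype.card G).minFac, ⟨Nat.minFac_prime h1, Nat.minFac_dvd _⟩, ?_⟩
      rintro q ⟨hq, hqdvd⟩
      by_contra hne
      have : Fact q.Prime := ⟨hq⟩
      have : Fact (Fintype.card G).minFac.Prime := ⟨Nat.minFac_prime h1⟩
      obtain ⟨a, ha⟩ := exists_prime_orderOf_dvd_card q hqdvd
      obtain ⟨b, hb⟩ := exists_prime_orderOf_dvd_card (Fintype.card G).minFac (Nat.minFac_dvd _)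
      have hab : a ≠ b := fun e => hne (by rw [← ha, ← hb, e])
      rcases hadj a b hab with hm | hm
      · have := orderOf_dvd_of_mem_zpowers hm
        rw [ha, hb] at this
        exact hne ((Nat.prime_dvd_prime_iff_eq hq (Nat.minFac_prime h1)).mp this)
      · have := orderOf_dvd_of_mem_zpowers hm
        rw [ha, hb] at this
        exact hne ((Nat.prime_dvd_prime_iff_eq (Nat.minFac_prime h1) hq).mp this).symm
    obtain ⟨p, k, hp, -, hcard⟩ := hpp
    exact ⟨p, k, Nat.prime_iff.mpr hp, hcard.symm⟩
  · rintro ⟨hcyc, hcard⟩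
    ext x y
    simp only [powerGraph, SimpleGraph.top_adj]
    constructor
    · exact fun h => h.1
    intro hne
    refine ⟨hne, ?_⟩
    rcases hcard with h1 | ⟨p, m, hp, hcard⟩
    · have := Fintype.card_le_one_iff_subsingleton.mp h1.le
      exact absurd (Subsingleton.elim x y) hne
    · have hx : orderOf x ∣ p ^ m := hcard ▸ orderOf_dvd_card
      have hy : orderOf y ∣ p ^ m := hcard ▸ orderOf_dvd_card
      obtain ⟨a, -, hxa⟩ := (Nat.dvd_prime_pow hp).mp hx
      obtain ⟨b, -, hyb⟩ := (Nat.dvd_prime_pow hp).mp hy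
      rcases le_total a b with hab | hab
      · exact Or.inl (mem_zpowers_of_orderOf_dvd (by rw [hxa, hyb]; exact pow_dvd_pow p hab))
      · exact Or.inr (mem_zpowers_of_orderOf_dvd (by rw [hxa, hyb]; exact pow_dvd_pow p hab))
end

section
/- Let G be a finite p-group for a prime p. Then the proper power graph P*(G) (the power graph with the identity vertex removed) has exactly c_p connected components, where c_p is the number of distinct cyclic subgroups of order p in G. -/
section aux

variable {G : Type*} [Group G] [Finite G] {p : ℕ}

/-- order of the canonical p-element. -/
lemma orderOf_canon (hp : p.Prime) (hG : ∀ g : G, ∃ n : ℕ, orderOf g = p ^ n)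
    {g : G} (hg : g ≠ 1) : orderOf (g ^ (orderOf g / p)) = p := by
  obtain ⟨n, hn⟩ := hG g
  have hn0 : n ≠ 0 := by
    rintro rfl
    exact hg (orderOf_eq_one_iff.mp (by simpa using hn))
  obtain ⟨m, rfl⟩ := Nat.exists_eq_succ_of_ne_zero hn0
  rw [orderOf_pow, hn, pow_succ]
  have h1 : p ^ m * p / p = p ^ m := Nat.mul_div_cancel _ hp.pos
  rw [h1, Nat.gcd_eq_right ⟨p, rfl⟩, Nat.mul_div_cancel_left _ (pow_pos hp.pos m)]

/-- uniqueness of the order-p subgroup inside a cyclic subgroup. -/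
lemma subgroup_eq_canon (hp : p.Prime) (hG : ∀ g : G, ∃ n : ℕ, orderOf g = p ^ n)
    {g : G} (hg : g ≠ 1) {P : Subgroup G} (hle : P ≤ Subgroup.zpowers g)
    (hcard : Nat.card P = p) : P = Subgroup.zpowers (g ^ (orderOf g / p)) := by
  -- find a nontrivial element of P
  have hnt : Nontrivial P :=
    Finite.one_lt_card_iff_nontrivial.mp (by rw [hcard]; exact hp.one_lt)
  obtain ⟨a', ha1'⟩ := exists_ne (1 : P)
  set a : G := (a' : G) with ha'
  have ha : a ∈ P := a'.2
  have ha1 : a ≠ 1 := fun h => ha1' (Subtype.ext h)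
  have haP : orderOf a = p := by
    have hdvd : orderOf a ∣ p := by
      rw [← hcard]
      exact Subgroup.orderOf_dvd_natCard P ha
    rcases (Nat.Prime.eq_one_or_self_of_dvd hp _ hdvd) with h | h
    · exact absurd (orderOf_eq_one_iff.mp h) ha1
    · exact h
  have hPa : P = Subgroup.zpowers a := by
    refine (Subgroup.eq_of_le_of_card_ge ?_ ?_).symm
    · exact Subgroup.zpowers_le.mpr ha
    · rw [hcard, Nat.card_zpowers, haP]
  -- a is a power of g
  have hag : a ∈ Subgroup.zpowers g := hle ha
  rw [← mem_powers_iff_mem_zpowers] at hag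
  obtain ⟨k, hk⟩ := hag
  have hk' : g ^ k = a := hk
  rw [← hk'] at haP hPa
  have hgcd : Nat.gcd (orderOf g) k = orderOf g / p := by
    have h2 : orderOf g / Nat.gcd (orderOf g) k = p := by
      rw [← orderOf_pow (n := k) g, haP]
    have h3 : orderOf g = Nat.gcd (orderOf g) k * p :=
      Nat.eq_mul_of_div_eq_right (Nat.gcd_dvd_left _ _) h2
    conv_rhs => rw [h3, Nat.mul_div_cancel _ hp.pos]
  have hdvdk : orderOf g / p ∣ k := hgcd ▸ Nat.gcd_dvd_right _ _
  obtain ⟨m, rfl⟩ := hdvdk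
  rw [hPa]
  refine Subgroup.eq_of_le_of_card_ge ?_ ?_
  · exact Subgroup.zpowers_le.mpr (by
      rw [pow_mul]
      exact Subgroup.pow_mem _ (Subgroup.mem_zpowers _) m)
  · rw [Nat.card_zpowers, Nat.card_zpowers, haP, orderOf_canon hp hG hg]

end aux

/-- For a finite `p`-group `G`, the proper power graph `P*(G)` has exactly `c_p`
connected components, where `c_p` is the number of cyclic subgroups of order `p`. -/
theorem properPowerGraph_card_connectedComponent (G : Type*) [Group G] [Finite G]
    (p : ℕ) (hp : p.Prime) (hG : ∀ g : G, ∃ n : ℕ, orderOf g = p ^ n) :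
    Nat.card (properPowerGraph G).ConnectedComponent =
      Nat.card {H : Subgroup G // IsCyclic H ∧ Nat.card H = p} := by
  classical
  -- the canonical order-p subgroup attached to a nontrivial element
  set f : {g : G // g ≠ 1} → {H : Subgroup G // IsCyclic H ∧ Nat.card H = p} :=
    fun g => ⟨Subgroup.zpowers ((g : G) ^ (orderOf (g : G) / p)), by
      have hc : Nat.card (Subgroup.zpowers ((g : G) ^ (orderOf (g : G) / p))) = p := by
        rw [Nat.card_zpowers, orderOf_canon hp hG g.2]
      exact ⟨isCyclic_of_prime_card (hp := Fact.mk hp) hc, hc⟩⟩ with hf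
  have hcardf : ∀ g : {g : G // g ≠ 1},
      Nat.card ((f g : Subgroup G)) = p := fun g => (f g).2.2
  -- if x is a power of y then f x = f y
  have hkey : ∀ x y : {g : G // g ≠ 1}, (x : G) ∈ Subgroup.zpowers (y : G) → f x = f y := by
    intro x y h
    apply Subtype.ext
    have h1 : (f x : Subgroup G) = Subgroup.zpowers ((y : G) ^ (orderOf (y : G) / p)) := by
      apply subgroup_eq_canon hp hG y.2 _ (hcardf x)
      calc (f x : Subgroup G) ≤ Subgroup.zpowers (x : G) :=
            Subgroup.zpowers_le.mpr (Subgroup.pow_mem _ (Subgroup.mem_zpowers _) _)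
        _ ≤ Subgroup.zpowers (y : G) := Subgroup.zpowers_le.mpr h
    have h2 : (f y : Subgroup G) = Subgroup.zpowers ((y : G) ^ (orderOf (y : G) / p)) := rfl
    rw [h1, h2]
  -- adjacency preserves f
  have hadj : ∀ x y : {g : G // g ≠ 1}, (properPowerGraph G).Adj x y → f x = f y := by
    rintro x y ⟨hne, h | h⟩
    · exact hkey x y h
    · exact (hkey y x h).symm
  -- lift f to connected components
  have hwalk : ∀ (x y : {g : G // g ≠ 1}) (w : (properPowerGraph G).Walk x y), f x = f y := by
    intro x y w
    induction w with
    | nil => rfl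
    | cons h _ ih => exact (hadj _ _ h).trans ih
  set F : (properPowerGraph G).ConnectedComponent →
      {H : Subgroup G // IsCyclic H ∧ Nat.card H = p} :=
    SimpleGraph.ConnectedComponent.lift f (fun x y w _ => hwalk x y w) with hF
  have hFmk : ∀ x, F ((properPowerGraph G).connectedComponentMk x) = f x := fun _ => rfl
  -- the canonical element of f g is connected to g
  have hcanon_ne : ∀ g : {g : G // g ≠ 1}, ((g : G) ^ (orderOf (g : G) / p)) ≠ 1 := by
    intro g h
    have := orderOf_canon hp hG g.2 (g := (g : G))
    rw [orderOf_eq_one_iff.mpr h] at this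
    exact hp.one_lt.ne this
  have hreach : ∀ g : {g : G // g ≠ 1},
      (properPowerGraph G).Reachable g ⟨(g : G) ^ (orderOf (g : G) / p), hcanon_ne g⟩ := by
    intro g
    by_cases h : (g : G) = (g : G) ^ (orderOf (g : G) / p)
    · have heq : g = (⟨(g : G) ^ (orderOf (g : G) / p), hcanon_ne g⟩ : {g : G // g ≠ 1}) :=
        Subtype.ext h
      exact heq ▸ SimpleGraph.Reachable.refl g
    · refine SimpleGraph.Adj.reachable ?_
      show (powerGraph G).Adj (g : G) ((g : G) ^ (orderOf (g : G) / p))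
      exact ⟨h, Or.inr (Subgroup.pow_mem _ (Subgroup.mem_zpowers _) _)⟩
  apply Nat.card_eq_of_bijective F
  constructor
  · -- injective
    intro c d hcd
    obtain ⟨x, rfl⟩ := c.exists_rep
    obtain ⟨y, rfl⟩ := d.exists_rep
    have hcd' : f x = f y := hcd
    apply SimpleGraph.ConnectedComponent.sound
    refine (hreach x).trans (SimpleGraph.Reachable.trans ?_ (hreach y).symm)
    set a : G := (x : G) ^ (orderOf (x : G) / p)
    set b : G := (y : G) ^ (orderOf (y : G) / p)
    have hab : Subgroup.zpowers a = Subgroup.zpowers b := congrArg Subtype.val hcd'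
    by_cases h : a = b
    · have heq : (⟨a, hcanon_ne x⟩ : {g : G // g ≠ 1}) = ⟨b, hcanon_ne y⟩ := Subtype.ext h
      exact heq ▸ SimpleGraph.Reachable.refl _
    · refine SimpleGraph.Adj.reachable ?_
      show (powerGraph G).Adj a b
      exact ⟨h, Or.inl (by rw [← hab]; exact Subgroup.mem_zpowers a)⟩
  · -- surjective
    rintro ⟨H, hc, hcard⟩
    have hnt : Nontrivial H :=
      Finite.one_lt_card_iff_nontrivial.mp (by rw [hcard]; exact hp.one_lt)
    obtain ⟨h', h1'⟩ := exists_ne (1 : H)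
    set h : G := (h' : G) with hh'
    have hH : h ∈ H := h'.2
    have h1 : h ≠ 1 := fun hc => h1' (Subtype.ext hc)
    refine ⟨(properPowerGraph G).connectedComponentMk ⟨h, h1⟩, ?_⟩
    rw [hFmk]
    apply Subtype.ext
    show Subgroup.zpowers (h ^ (orderOf h / p)) = H
    have hoh : orderOf h = p := by
      have hdvd : orderOf h ∣ p := hcard ▸ Subgroup.orderOf_dvd_natCard H hH
      rcases hp.eq_one_or_self_of_dvd _ hdvd with h' | h'
      · exact absurd (orderOf_eq_one_iff.mp h') h1
      · exact h'
    rw [hoh, Nat.div_self hp.pos, pow_one]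
    refine Subgroup.eq_of_le_of_card_ge (Subgroup.zpowers_le.mpr hH) ?_
    rw [hcard, Nat.card_zpowers, hoh]
end

section
/- Let G be a finite group and let Ω be a connected component of the proper power graph P*(G) that is a clique. Then there exists an element β of G of prime power order p^k (p prime) such that Ω equals the vertex set ⟨β⟩ \ {1}. -/
/-- A connected component of the proper power graph that is a clique is of the form
`⟨β⟩ \ {1}` for some element `β` of prime power order. -/
theorem clique_component_eq_zpowers (G : Type*) [Group G] [Finite G]
    (c : (properPowerGraph G).ConnectedComponent)
    (hc : (properPowerGraph G).IsClique c.supp) :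
    ∃ (β : G) (p k : ℕ), p.Prime ∧ orderOf β = p ^ k ∧
      Subtype.val '' c.supp = (Subgroup.zpowers β : Set G) \ {1} := by
  classical
  obtain ⟨v, hv⟩ := c.exists_rep
  have hvsupp : v ∈ c.supp := by
    rw [SimpleGraph.ConnectedComponent.mem_supp_iff]; exact hv
  obtain ⟨β, hβ, hmax⟩ := Set.Finite.exists_maximalFor (fun x : {g : G // g ≠ 1} => orderOf (x : G))
    c.supp (Set.toFinite _) ⟨v, hvsupp⟩
  -- every element of the component lies in ⟨β⟩
  have h1 : ∀ x ∈ c.supp, (x : G) ∈ Subgroup.zpowers (β : G) := by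
    intro x hx
    by_cases hxb : x = β
    · subst hxb; exact Subgroup.mem_zpowers _
    · have hadj := hc hx hβ hxb
      have hmem : (x : G) ∈ Subgroup.zpowers (β : G) ∨
          (β : G) ∈ Subgroup.zpowers (x : G) := by
        simpa [properPowerGraph, powerGraph, SimpleGraph.induce] using hadj.2
      rcases hmem with h | h
      · exact h
      · have hdvd := orderOf_dvd_of_mem_zpowers h
        have hpos : 0 < orderOf (x : G) := orderOf_pos _
        have hle : orderOf (β : G) ≤ orderOf (x : G) := Nat.le_of_dvd hpos hdvd
        have heq : orderOf (β : G) = orderOf (x : G) := le_antisymm hle (hmax hx hle)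
        have hsub : Subgroup.zpowers (β : G) = Subgroup.zpowers (x : G) :=
          Subgroup.eq_of_le_of_card_ge (Subgroup.zpowers_le.mpr h)
            (by rw [Nat.card_zpowers, Nat.card_zpowers, heq])
        rw [hsub]; exact Subgroup.mem_zpowers _
  -- every nonidentity element of ⟨β⟩ lies in the component
  have hβc : SimpleGraph.connectedComponentMk (properPowerGraph G) β = c :=
    (SimpleGraph.ConnectedComponent.mem_supp_iff _ _).mp hβ
  have h2 : ∀ (x : G) (hxm : x ∈ Subgroup.zpowers (β : G)) (hx : x ≠ 1),
      (⟨x, hx⟩ : {g : G // g ≠ 1}) ∈ c.supp := by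
    intro x hxm hx
    by_cases hxb : x = (β : G)
    · have : (⟨x, hx⟩ : {g : G // g ≠ 1}) = β := Subtype.ext hxb
      rwa [this]
    · have hadj : (properPowerGraph G).Adj ⟨x, hx⟩ β := by
        refine ⟨?_, Or.inl hxm⟩
        exact hxb
      rw [SimpleGraph.ConnectedComponent.mem_supp_iff, ← hβc]
      exact SimpleGraph.ConnectedComponent.sound hadj.reachable
  -- order of β is a prime power
  set n := orderOf (β : G) with hn
  have hn1 : n ≠ 1 := by
    simpa [hn, orderOf_eq_one_iff] using β.2
  have hn0 : n ≠ 0 := (orderOf_pos (β : G)).ne'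
  -- for each prime dividing n, an element of ⟨β⟩ of that order
  have key : ∀ p : ℕ, p.Prime → p ∣ n → ∃ a : G,
      a ∈ Subgroup.zpowers (β : G) ∧ orderOf a = p := by
    intro p hp hdvd
    haveI := Fact.mk hp
    have hcard : p ∣ Nat.card (Subgroup.zpowers (β : G)) := by
      rwa [Nat.card_zpowers]
    obtain ⟨g, hg⟩ := exists_prime_orderOf_dvd_card' p hcard
    exact ⟨g, g.2, by rw [Subgroup.orderOf_coe]; exact hg⟩
  have huniq : ∀ {q : ℕ}, q.Prime → q ∣ n → q = n.minFac := by
    intro q hq hqdvd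
    have hpmin : (n.minFac).Prime := Nat.minFac_prime hn1
    by_contra hne
    obtain ⟨a, ham, hao⟩ := key q hq hqdvd
    obtain ⟨b, hbm, hbo⟩ := key n.minFac hpmin (Nat.minFac_dvd n)
    have ha1 : a ≠ 1 := by
      intro h; rw [h, orderOf_one] at hao; exact hq.ne_one hao.symm
    have hb1 : b ≠ 1 := by
      intro h; rw [h, orderOf_one] at hbo; exact hpmin.ne_one hbo.symm
    have hasupp := h2 a ham ha1
    have hbsupp := h2 b hbm hb1
    have hab : (⟨a, ha1⟩ : {g : G // g ≠ 1}) ≠ ⟨b, hb1⟩ := by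
      intro h
      apply hne
      rw [← hao, ← hbo]
      exact congrArg orderOf (congrArg Subtype.val h)
    have hadj := hc hasupp hbsupp hab
    have hadj2 : a ∈ Subgroup.zpowers b ∨ b ∈ Subgroup.zpowers a := by
      have := hadj.2
      simpa [Function.Embedding.coe_subtype] using this
    rcases hadj2 with h | h
    · have := orderOf_dvd_of_mem_zpowers h
      rw [hao, hbo] at this
      exact hne ((Nat.prime_dvd_prime_iff_eq hq hpmin).mp this)
    · have := orderOf_dvd_of_mem_zpowers h
      rw [hao, hbo] at this
      exact hne ((Nat.prime_dvd_prime_iff_eq hpmin hq).mp this).symm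
  have hpow : n = n.minFac ^ n.primeFactorsList.length :=
    Nat.eq_prime_pow_of_unique_prime_dvd hn0 (fun hd hdn => huniq hd hdn)
  refine ⟨(β : G), n.minFac, n.primeFactorsList.length, Nat.minFac_prime hn1, hpow, ?_⟩
  ext x
  constructor
  · rintro ⟨y, hy, rfl⟩
    exact ⟨h1 y hy, y.2⟩
  · rintro ⟨hxm, hx1⟩
    have hx1' : x ≠ 1 := hx1
    exact ⟨⟨x, hx1'⟩, h2 x hxm hx1', rfl⟩
end

section
/- Let G be a finite group and let g ∈ G have prime order p, where p is maximal under divisibility in the set of element orders of G (i.e., no element of G has order a proper multiple of p). Then ⟨g⟩ \ {1} is a connected component of the proper power graph P*(G). -/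
/-- If `g` has prime order `p` maximal under divisibility among element orders,
then `⟨g⟩ \ {1}` is a connected component of the proper power graph. -/
theorem zpowers_sdiff_one_is_component (G : Type*) [Group G] [Finite G] (p : ℕ)
    (hp : p.Prime) (g : G) (hg : orderOf g = p)
    (hmax : ∀ h : G, p ∣ orderOf h → orderOf h = p) :
    ∃ c : (properPowerGraph G).ConnectedComponent,
      c.supp = {x : {g' : G // g' ≠ 1} | (x : G) ∈ Subgroup.zpowers g} := by
  have hg1 : g ≠ 1 := by
    intro h
    rw [h, orderOf_one] at hg
    exact hp.one_lt.ne hg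
  -- any nonidentity element of ⟨g⟩ generates ⟨g⟩
  have key : ∀ x : G, x ≠ 1 → x ∈ Subgroup.zpowers g →
      Subgroup.zpowers x = Subgroup.zpowers g := by
    intro x hx1 hx
    have hdvd : orderOf x ∣ p := hg ▸ orderOf_dvd_of_mem_zpowers hx
    have hox : orderOf x = p :=
      ((Nat.Prime.eq_one_or_self_of_dvd hp _ hdvd).resolve_left
        (by simpa [orderOf_eq_one_iff] using hx1))
    refine Subgroup.eq_of_le_of_card_ge ((Subgroup.zpowers_le).2 hx) ?_
    rw [Nat.card_zpowers, Nat.card_zpowers, hox, hg]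
  -- adjacency preserves membership in ⟨g⟩
  have step : ∀ x y : {g' : G // g' ≠ 1}, (properPowerGraph G).Adj x y →
      (x : G) ∈ Subgroup.zpowers g → (y : G) ∈ Subgroup.zpowers g := by
    rintro ⟨x, hx1⟩ ⟨y, hy1⟩ hadj hx
    rcases hadj.2 with h | h
    · -- x ∈ zpowers y
      have hpy : p ∣ orderOf y := by
        have := orderOf_dvd_of_mem_zpowers h
        have hox : orderOf x = p := by
          have hdvd : orderOf x ∣ p := hg ▸ orderOf_dvd_of_mem_zpowers hx
          exact (Nat.Prime.eq_one_or_self_of_dvd hp _ hdvd).resolve_left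
            (by simpa [orderOf_eq_one_iff] using hx1)
        exact hox ▸ this
      have hoy : orderOf y = p := hmax y hpy
      have : Subgroup.zpowers x = Subgroup.zpowers y := by
        refine Subgroup.eq_of_le_of_card_ge ((Subgroup.zpowers_le).2 h) ?_
        rw [Nat.card_zpowers, Nat.card_zpowers, hoy]
        have hox : orderOf x = p := by
          have hdvd : orderOf x ∣ p := hg ▸ orderOf_dvd_of_mem_zpowers hx
          exact (Nat.Prime.eq_one_or_self_of_dvd hp _ hdvd).resolve_left
            (by simpa [orderOf_eq_one_iff] using hx1)
        rw [hox]
      have : y ∈ Subgroup.zpowers x := this ▸ Subgroup.mem_zpowers y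
      exact (key x hx1 hx) ▸ this
    · -- y ∈ zpowers x
      exact (key x hx1 hx) ▸ h
  refine ⟨(properPowerGraph G).connectedComponentMk ⟨g, hg1⟩, ?_⟩
  ext x
  simp only [SimpleGraph.ConnectedComponent.mem_supp_iff, Set.mem_setOf_eq,
    SimpleGraph.ConnectedComponent.eq]
  constructor
  · intro hr
    obtain ⟨w⟩ := hr.symm
    -- walk from ⟨g,_⟩ to x; induct
    have : ∀ (a b : {g' : G // g' ≠ 1}), (properPowerGraph G).Walk a b →
        (a : G) ∈ Subgroup.zpowers g → (b : G) ∈ Subgroup.zpowers g := by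
      intro a b w
      induction w with
      | nil => exact fun h => h
      | cons hadj _ ih => exact fun h => ih (step _ _ hadj h)
    exact this _ _ w (Subgroup.mem_zpowers g)
  · intro hx
    by_cases hxg : x = ⟨g, hg1⟩
    · rw [hxg]
    · apply SimpleGraph.Adj.reachable
      refine ⟨?_, Or.inr ?_⟩
      · simpa using fun h => hxg (Subtype.ext h)
      · show (g : G) ∈ Subgroup.zpowers (x : G)
        exact (key x x.2 hx).symm ▸ Subgroup.mem_zpowers g
end

section
/- Let Γ be a simple graph on n vertices and suppose vertices v₁, …, v_k each have full degree n−1 (adjacent to all other vertices). Then n^k divides det(J + Q), where Q is the Laplacian matrix of Γ and J is the all-ones n×n matrix. -/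
lemma aux_row_dvd {V : Type*} [Fintype V] [DecidableEq V] (n : ℤ) (s : Finset V) :
    ∀ M : Matrix V V ℤ, (∀ v ∈ s, M v = n • Pi.single v 1) → n ^ s.card ∣ M.det := by
  classical
  induction s using Finset.induction with
  | empty => intro M _; simp
  | @insert v s hv ih =>
    intro M hM
    have hrow : M v = n • Pi.single v 1 := hM v (s.mem_insert_self v)
    have h2 : M.det = (M.updateRow v (Pi.single v 1)).det * n := by
      have := Matrix.det_updateRow_smul M v n (Pi.single v 1)
      rw [← hrow, Matrix.updateRow_eq_self] at this
      rw [this, mul_comm]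
    have h3 : n ^ s.card ∣ (M.updateRow v (Pi.single v 1)).det := by
      apply ih
      intro w hw
      rw [Matrix.updateRow_ne (show w ≠ v by rintro rfl; exact hv hw)]
      exact hM w (Finset.mem_insert_of_mem hw)
    rw [Finset.card_insert_of_notMem hv, pow_succ, h2]
    exact mul_dvd_mul h3 dvd_rfl

/-- If `k` vertices of a simple graph on `n` vertices have full degree `n - 1`,
then `n ^ k` divides `det (J + Q)`, `Q` the Laplacian and `J` the all-ones matrix. -/
theorem pow_card_dvd_det_J_add_lap {V : Type*} [Fintype V] [DecidableEq V]
    (Γ : SimpleGraph V) [DecidableRel Γ.Adj] (s : Finset V)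
    (hs : ∀ v ∈ s, Γ.degree v = Fintype.card V - 1) :
    ((Fintype.card V : ℤ)) ^ s.card ∣
      Matrix.det ((Matrix.of fun _ _ => (1 : ℤ)) + Γ.lapMatrix ℤ) := by
  classical
  apply aux_row_dvd
  intro v hv
  have hcard : 1 ≤ Fintype.card V := Fintype.card_pos_iff.mpr ⟨v⟩
  have hnb : Γ.neighborFinset v = Finset.univ.erase v := by
    apply Finset.eq_of_subset_of_card_le
    · intro w hw
      rw [SimpleGraph.mem_neighborFinset] at hw
      exact Finset.mem_erase.mpr ⟨(Γ.ne_of_adj hw).symm, Finset.mem_univ w⟩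
    · rw [Finset.card_erase_of_mem (Finset.mem_univ v), Finset.card_univ,
        ← hs v hv, SimpleGraph.card_neighborFinset_eq_degree]
  have hadj : ∀ w, w ≠ v → Γ.Adj v w := by
    intro w hw
    rw [← SimpleGraph.mem_neighborFinset, hnb]
    exact Finset.mem_erase.mpr ⟨hw, Finset.mem_univ w⟩
  funext w
  by_cases h : w = v
  · subst h
    simp [SimpleGraph.lapMatrix, SimpleGraph.degMatrix, SimpleGraph.adjMatrix,
      hs w hv, Pi.single_apply]
    push_cast [Nat.cast_sub hcard]
    ring
  · simp [SimpleGraph.lapMatrix, SimpleGraph.degMatrix, SimpleGraph.adjMatrix,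
      Pi.single_apply, (Ne.symm h : v ≠ w), hadj w h]
end

section
/- Let G be a finite group of order n and let m ∈ μ(G), i.e., m is the order of some element of G and m is maximal under divisibility among element orders. Then n·m^(φ(m)) divides det(J + Q), where Q is the Laplacian of the power graph P(G), J is the n×n all-ones matrix, and φ is Euler's totient function. -/
noncomputable instance {G : Type*} [Group G] : DecidableRel (powerGraph G).Adj :=
  Classical.decRel _


section Aux
open Subgroup Matrix Finset

variable {G : Type*} [Group G] [Fintype G] [DecidableEq G]

/-- Adjacency of a maximal-order generator. -/
lemma pg_adj_gen {m : ℕ} {g : G} (hg : orderOf g = m)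
    (hmax : ∀ h : G, m ∣ orderOf h → orderOf h = m)
    {u : G} (hu : zpowers u = zpowers g) (x : G) :
    (powerGraph G).Adj u x ↔ (x ∈ zpowers g ∧ x ≠ u) := by
  constructor
  · rintro ⟨hne, h | h⟩
    · -- u ∈ zpowers x
      have hle : zpowers g ≤ zpowers x := hu ▸ zpowers_le.mpr h
      have hdvd : m ∣ orderOf x := by
        have := Subgroup.card_dvd_of_le hle
        rwa [Nat.card_zpowers, Nat.card_zpowers, hg] at this
      have hox : orderOf x = m := hmax x hdvd
      have hcard : Nat.card (zpowers x) ≤ Nat.card (zpowers g) := by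
        rw [Nat.card_zpowers, Nat.card_zpowers, hg, hox]
      have : zpowers g = zpowers x := Subgroup.eq_of_le_of_card_ge hle hcard
      exact ⟨this ▸ mem_zpowers x, hne.symm⟩
    · exact ⟨hu ▸ h, hne.symm⟩
  · rintro ⟨hx, hne⟩
    exact ⟨hne.symm, Or.inr (hu ▸ hx)⟩

lemma pg_degree_gen {m : ℕ} {g : G} (hg : orderOf g = m)
    (hmax : ∀ h : G, m ∣ orderOf h → orderOf h = m)
    {u : G} (hu : zpowers u = zpowers g) :
    (powerGraph G).degree u = m - 1 := by
  classical
  rw [← SimpleGraph.card_neighborFinset_eq_degree]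
  have : (powerGraph G).neighborFinset u
      = (univ.filter (fun x => x ∈ zpowers g)).erase u := by
    ext x
    simp only [SimpleGraph.mem_neighborFinset, pg_adj_gen hg hmax hu, mem_erase,
      mem_filter, mem_univ, true_and]
    tauto
  rw [this, Finset.card_erase_of_mem]
  · congr 1
    have : (univ.filter (fun x => x ∈ zpowers g)).card
        = Fintype.card {x : G // x ∈ zpowers g} := (Fintype.card_subtype _).symm
    rw [this, ← Nat.card_eq_fintype_card]
    exact (Nat.card_zpowers g).trans hg
  · simp only [mem_filter, mem_univ, true_and]
    exact hu ▸ mem_zpowers u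

lemma pg_degree_one : (powerGraph G).degree (1 : G) = Fintype.card G - 1 := by
  classical
  rw [← SimpleGraph.card_neighborFinset_eq_degree]
  have : (powerGraph G).neighborFinset (1 : G) = univ.erase 1 := by
    ext x
    simp only [SimpleGraph.mem_neighborFinset, mem_erase, mem_univ, and_true]
    constructor
    · rintro ⟨hne, -⟩; exact hne.symm
    · intro h; exact ⟨Ne.symm h, Or.inl (Subgroup.one_mem _)⟩
  rw [this, Finset.card_erase_of_mem (mem_univ _), Finset.card_univ]


lemma M_apply (i j : G) :
    (((Matrix.of fun _ _ => (1 : ℤ)) + (powerGraph G).lapMatrix ℤ) : Matrix G G ℤ) i j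
      = 1 + ((if i = j then ((powerGraph G).degree i : ℤ) else 0)
          - (if (powerGraph G).Adj i j then 1 else 0)) := by
  simp [SimpleGraph.lapMatrix, SimpleGraph.degMatrix, Matrix.diagonal_apply,
    SimpleGraph.adjMatrix_apply, Matrix.sub_apply, Matrix.add_apply]

lemma M_row_one (j : G) :
    (((Matrix.of fun _ _ => (1 : ℤ)) + (powerGraph G).lapMatrix ℤ) : Matrix G G ℤ) 1 j
      = if (1 : G) = j then (Fintype.card G : ℤ) else 0 := by
  have hn : 1 ≤ Fintype.card G := Fintype.card_pos
  have hadj : ∀ x : G, (powerGraph G).Adj 1 x ↔ (1 : G) ≠ x := by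
    intro x
    constructor
    · rintro ⟨hne, -⟩; exact hne
    · intro h; exact ⟨h, Or.inl (Subgroup.one_mem _)⟩
  rw [M_apply, pg_degree_one]
  by_cases h : (1 : G) = j
  · subst h
    rw [if_pos rfl, if_pos rfl, if_neg (by simp [hadj])]
    push_cast [Nat.cast_sub hn]
    ring
  · rw [if_neg h, if_neg h, if_pos ((hadj j).mpr h)]
    ring

lemma M_row_sum (i : G) :
    ∑ j, (((Matrix.of fun _ _ => (1 : ℤ)) + (powerGraph G).lapMatrix ℤ) : Matrix G G ℤ) i j
      = (Fintype.card G : ℤ) := by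
  have h0 : ((powerGraph G).lapMatrix ℤ *ᵥ fun _ => 1) i = 0 := by
    rw [SimpleGraph.lapMatrix_mulVec_const_eq_zero]; rfl
  simp only [Matrix.mulVec, dotProduct, mul_one] at h0
  calc ∑ j, (((Matrix.of fun _ _ => (1 : ℤ)) + (powerGraph G).lapMatrix ℤ) : Matrix G G ℤ) i j
      = ∑ j, ((1 : ℤ) + (powerGraph G).lapMatrix ℤ i j) := by
        refine Finset.sum_congr rfl fun j _ => ?_
        simp [Matrix.add_apply]
    _ = (Fintype.card G : ℤ) := by
        rw [Finset.sum_add_distrib, h0, Finset.sum_const, Finset.card_univ]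
        simp

lemma M_row_gen_sub {m : ℕ} {g : G} (hg : orderOf g = m)
    (hmax : ∀ h : G, m ∣ orderOf h → orderOf h = m)
    {u : G} (hu : Subgroup.zpowers u = Subgroup.zpowers g) (hug : u ≠ g) (j : G) :
    (((Matrix.of fun _ _ => (1 : ℤ)) + (powerGraph G).lapMatrix ℤ) : Matrix G G ℤ) u j
      - (((Matrix.of fun _ _ => (1 : ℤ)) + (powerGraph G).lapMatrix ℤ) : Matrix G G ℤ) g j
      = (m : ℤ) * ((if j = u then 1 else 0) - (if j = g then 1 else 0)) := by
  have hm1 : 1 ≤ m := hg ▸ Nat.one_le_iff_ne_zero.mpr (orderOf_pos g).ne'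
  have humem : u ∈ Subgroup.zpowers g := hu ▸ Subgroup.mem_zpowers u
  have hgmem : g ∈ Subgroup.zpowers g := Subgroup.mem_zpowers g
  have hdegu : ((powerGraph G).degree u : ℤ) = (m : ℤ) - 1 := by
    rw [pg_degree_gen hg hmax hu]; push_cast [Nat.cast_sub hm1]; ring
  have hdegg : ((powerGraph G).degree g : ℤ) = (m : ℤ) - 1 := by
    rw [pg_degree_gen hg hmax rfl]; push_cast [Nat.cast_sub hm1]; ring
  rw [M_apply, M_apply]
  simp only [pg_adj_gen hg hmax hu,
    pg_adj_gen hg hmax (rfl : Subgroup.zpowers g = Subgroup.zpowers g)]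
  rw [hdegu, hdegg]
  split_ifs with h1 h2 h3 h4 h5 h6 <;>
    first
      | ring1
      | (exfalso; subst_vars; simp_all)

open scoped Classical in
lemma totient_le_card_gens {m : ℕ} {g : G} (hg : orderOf g = m) :
    m.totient ≤ (Finset.univ.filter
      (fun x : G => Subgroup.zpowers x = Subgroup.zpowers g)).card := by
  classical
  set H := Subgroup.zpowers g with hH
  letI : Fintype H := Fintype.ofFinite _
  haveI : IsCyclic H := by
    refine ⟨⟨⟨g, Subgroup.mem_zpowers g⟩, ?_⟩⟩
    rintro ⟨x, hx⟩
    obtain ⟨k, hk⟩ := Subgroup.mem_zpowers_iff.mp hx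
    refine Subgroup.mem_zpowers_iff.mpr ⟨k, ?_⟩
    ext
    simpa using hk
  have hcardH : Fintype.card H = m := by
    rw [← Nat.card_eq_fintype_card, Nat.card_zpowers, hg]
  have hfilter : (Finset.univ.filter (fun y : H => orderOf y = m)).card = m.totient := by
    apply IsCyclic.card_orderOf_eq_totient
    rw [hcardH]
  rw [← hfilter]
  apply Finset.card_le_card_of_injOn (fun y : H => (y : G))
  · intro y hy
    simp only [Finset.mem_coe, Finset.mem_filter, Finset.mem_univ, true_and] at hy ⊢
    have hle : Subgroup.zpowers ((y : H) : G) ≤ H := Subgroup.zpowers_le.mpr (y : H).2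
    refine Subgroup.eq_of_le_of_card_ge hle ?_
    rw [Nat.card_zpowers, Nat.card_zpowers, hg, Subgroup.orderOf_coe, hy]
  · intro a _ b _ hab
    exact Subtype.coe_injective hab

lemma M_symm (i j : G) :
    (((Matrix.of fun _ _ => (1 : ℤ)) + (powerGraph G).lapMatrix ℤ) : Matrix G G ℤ) i j
      = (((Matrix.of fun _ _ => (1 : ℤ)) + (powerGraph G).lapMatrix ℤ) : Matrix G G ℤ) j i := by
  rw [M_apply, M_apply]
  by_cases h : i = j
  · subst h; rfl
  · rw [if_neg h, if_neg (Ne.symm h)]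
    simp only [SimpleGraph.adj_comm (powerGraph G) i j]

lemma M_col_sum (j : G) :
    ∑ k, (((Matrix.of fun _ _ => (1 : ℤ)) + (powerGraph G).lapMatrix ℤ) : Matrix G G ℤ) k j
      = (Fintype.card G : ℤ) := by
  calc ∑ k, (((Matrix.of fun _ _ => (1 : ℤ)) + (powerGraph G).lapMatrix ℤ) : Matrix G G ℤ) k j
      = ∑ k, (((Matrix.of fun _ _ => (1 : ℤ)) + (powerGraph G).lapMatrix ℤ) : Matrix G G ℤ) j k :=
        Finset.sum_congr rfl fun k _ => M_symm k j
    _ = _ := M_row_sum j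

end Aux

/-- If `m ∈ μ(G)` (an element order maximal under divisibility), then
`|G| * m ^ φ(m)` divides `det (J + Q)` for the power graph of `G`. -/
theorem card_mul_pow_totient_dvd_det (G : Type*) [Group G] [Fintype G] [DecidableEq G]
    (m : ℕ) (hex : ∃ g : G, orderOf g = m)
    (hmax : ∀ h : G, m ∣ orderOf h → orderOf h = m) :
    ((Fintype.card G : ℤ) * (m : ℤ) ^ m.totient) ∣
      Matrix.det ((Matrix.of fun _ _ => (1 : ℤ)) + (powerGraph G).lapMatrix ℤ) := by
  classical
  obtain ⟨g, hg⟩ := hex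
  set M : Matrix G G ℤ := (Matrix.of fun _ _ => (1 : ℤ)) + (powerGraph G).lapMatrix ℤ with hMdef
  set n : ℕ := Fintype.card G with hndef
  have hn1 : 1 ≤ n := Fintype.card_pos
  have hmdvd : m ∣ n := hg ▸ orderOf_dvd_card
  by_cases hcase : ∀ x : G, x ≠ 1 → Subgroup.zpowers x = Subgroup.zpowers g
  · -- complete graph case : M = n • 1, det = n ^ n
    have hadj : ∀ i x : G, (powerGraph G).Adj i x ↔ i ≠ x := by
      intro i x
      constructor
      · exact fun h => h.1
      · intro hne
        refine ⟨hne, ?_⟩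
        by_cases hi1 : i = 1
        · subst hi1; exact Or.inl (Subgroup.one_mem _)
        · by_cases hx1 : x = 1
          · subst hx1; exact Or.inr (Subgroup.one_mem _)
          · left
            rw [hcase x hx1, ← hcase i hi1]
            exact Subgroup.mem_zpowers i
    have hdeg : ∀ i : G, (powerGraph G).degree i = n - 1 := by
      intro i
      rw [← SimpleGraph.card_neighborFinset_eq_degree]
      have : (powerGraph G).neighborFinset i = Finset.univ.erase i := by
        ext x
        simp only [SimpleGraph.mem_neighborFinset, hadj, Finset.mem_erase, Finset.mem_univ,
          and_true, ne_eq]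
        exact ⟨fun h => fun hh => h hh.symm, fun h => fun hh => h hh.symm⟩
      rw [this, Finset.card_erase_of_mem (Finset.mem_univ _), Finset.card_univ]
    have hMeq : M = (n : ℤ) • (1 : Matrix G G ℤ) := by
      ext i j
      rw [hMdef, M_apply, Matrix.smul_apply, Matrix.one_apply, hdeg]
      by_cases h : i = j
      · subst h
        rw [if_pos rfl, if_neg ((hadj i i).not.mpr (by simp)), if_pos rfl, smul_eq_mul,
          mul_one]
        push_cast [Nat.cast_sub hn1]
        ring
      · rw [if_neg h, if_pos ((hadj i j).mpr h), if_neg h, smul_eq_mul, mul_zero]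
        ring
    rw [hMeq, Matrix.det_smul, Matrix.det_one, mul_one]
    -- goal : (n : ℤ) * m ^ totient ∣ (n:ℤ) ^ n
    by_cases hm1 : m = 1
    · have hnone : n = 1 := by
        have : ∀ x : G, x = 1 := fun x =>
          orderOf_eq_one_iff.mp ((hmax x (hm1 ▸ one_dvd _)).trans hm1)
        rw [hndef]
        exact Fintype.card_eq_one_iff.mpr ⟨1, fun x => this x⟩
      subst hm1; rw [hnone]; simp
    · have hm0 : m ≠ 0 := by
        intro h
        rw [h] at hg
        exact (orderOf_eq_zero_iff.mp hg) (isOfFinOrder_of_finite g)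
      have hm2 : 2 ≤ m := by omega
      have hmn : m ≤ n := Nat.le_of_dvd hn1 hmdvd
      have hφ : m.totient ≤ n - 1 :=
        le_trans (Nat.le_sub_one_of_lt (Nat.totient_lt m (by omega))) (by omega)
      calc ((n : ℤ) * (m : ℤ) ^ m.totient)
          ∣ (n : ℤ) * (n : ℤ) ^ m.totient :=
            mul_dvd_mul_left _ (pow_dvd_pow_of_dvd (Int.natCast_dvd_natCast.mpr hmdvd) _)
        _ ∣ (n : ℤ) * (n : ℤ) ^ (n - 1) :=
            mul_dvd_mul_left _ (pow_dvd_pow _ hφ)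
        _ = (n : ℤ) ^ n := by
            rw [← pow_succ']
            congr 1
            omega
  · -- main case
    push_neg at hcase
    obtain ⟨x0, hx01, hx0S⟩ := hcase
    have hm2 : 2 ≤ m := by
      have hm0 : m ≠ 0 := by
        intro h
        rw [h] at hg
        exact (orderOf_eq_zero_iff.mp hg) (isOfFinOrder_of_finite g)
      have hm1' : m ≠ 1 := by
        intro h
        exact hx01 (orderOf_eq_one_iff.mp ((hmax x0 (h ▸ one_dvd _)).trans h))
      omega
    have hg1 : g ≠ 1 := by
      intro h
      rw [h, orderOf_one] at hg
      omega
    have hx0g : x0 ≠ g := fun h => hx0S (h ▸ rfl)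
    set S' : Finset G := (Finset.univ.filter
      (fun x : G => Subgroup.zpowers x = Subgroup.zpowers g)).erase g with hS'def
    have hgS' : g ∉ S' := Finset.notMem_erase _ _
    have hx0S' : x0 ∉ S' := by
      intro h
      exact hx0S (Finset.mem_filter.mp (Finset.mem_of_mem_erase h)).2
    have h1S' : (1 : G) ∉ S' := by
      intro h
      have h1 := (Finset.mem_filter.mp (Finset.mem_of_mem_erase h)).2
      have : g ∈ Subgroup.zpowers (1 : G) := h1 ▸ Subgroup.mem_zpowers g
      rw [Subgroup.zpowers_one_eq_bot, Subgroup.mem_bot] at this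
      exact hg1 this
    have hS'mem : ∀ u ∈ S', Subgroup.zpowers u = Subgroup.zpowers g ∧ u ≠ g := by
      intro u hu
      exact ⟨(Finset.mem_filter.mp (Finset.mem_of_mem_erase hu)).2, Finset.ne_of_mem_erase hu⟩
    -- step 1 : replace row x0 by the all-n row
    set N0 : Matrix G G ℤ := M.updateRow x0 (fun _ => (n : ℤ)) with hN0def
    have hdet0 : N0.det = M.det := by
      have hrow : (fun _ => (n : ℤ)) = ∑ k : G, (fun _ => (1 : ℤ)) k • M k := by
        funext j
        rw [Finset.sum_apply]
        simp only [Pi.smul_apply, smul_eq_mul, one_mul]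
        rw [hMdef]
        exact (M_col_sum j).symm
      rw [hN0def, hrow]
      simpa using Matrix.det_updateRow_sum M x0 (fun _ => (1 : ℤ))
    have hN0row : ∀ i, i ≠ x0 → N0 i = M i := fun i hi => Matrix.updateRow_ne hi
    -- step 2 : subtract row g from each row u ∈ S'
    set Nmat : Finset G → Matrix G G ℤ := fun T =>
      Matrix.of (fun i j => if i ∈ T then M i j - M g j else N0 i j) with hNmatdef
    have key : ∀ T : Finset G, T ⊆ S' → (Nmat T).det = M.det := by
      intro T
      induction T using Finset.induction_on with
      | empty =>
          intro _
          have : Nmat ∅ = N0 := by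
            ext i j
            simp [hNmatdef]
          rw [this, hdet0]
      | @insert u T huT ih =>
          intro hsub
          have hTs : T ⊆ S' := fun y hy => hsub (Finset.mem_insert_of_mem hy)
          have huS' : u ∈ S' := hsub (Finset.mem_insert_self u T)
          have hug : u ≠ g := (hS'mem u huS').2
          have hux0 : u ≠ x0 := fun h => hx0S' (h ▸ huS')
          have hgx0 : g ≠ x0 := Ne.symm hx0g
          have hstep : Nmat (insert u T) =
              (Nmat T).updateRow u ((Nmat T) u + (-1 : ℤ) • (Nmat T) g) := by
            ext i j
            by_cases hiu : i = u
            · subst hiu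
              rw [Matrix.updateRow_self]
              simp only [hNmatdef, Matrix.of_apply, Pi.add_apply, Pi.smul_apply, smul_eq_mul]
              rw [if_pos (Finset.mem_insert_self _ _), if_neg huT,
                if_neg (fun h : g ∈ T => hgS' (hTs h))]
              rw [hN0row _ hux0, hN0row _ hgx0]
              ring
            · rw [Matrix.updateRow_ne hiu]
              simp only [hNmatdef, Matrix.of_apply]
              by_cases hiT : i ∈ T
              · rw [if_pos (Finset.mem_insert_of_mem hiT), if_pos hiT]
              · rw [if_neg (fun h => (Finset.mem_insert.mp h).elim (fun e => hiu e) hiT),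
                  if_neg hiT]
          rw [hstep, Matrix.det_updateRow_add_smul_self _ hug (-1 : ℤ), ih hTs]
    have hdetS' : (Nmat S').det = M.det := key S' le_rfl
    -- step 3 : factor out scalars
    set v : G → ℤ := fun i =>
      (if i = x0 then (n : ℤ) else 1) * (if i = 1 then (n : ℤ) else 1) *
        (if i ∈ S' then (m : ℤ) else 1) with hvdef
    set R : Matrix G G ℤ := Matrix.of (fun i j =>
      if i = x0 then 1
      else if i = 1 then (if (1 : G) = j then 1 else 0)
      else if i ∈ S' then ((if j = i then 1 else 0) - (if j = g then 1 else 0))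
      else M i j) with hRdef
    have hNR : Nmat S' = Matrix.of (fun i j => v i * R i j) := by
      ext i j
      simp only [hNmatdef, hRdef, hvdef, Matrix.of_apply]
      by_cases hix0 : i = x0
      · subst hix0
        rw [if_neg hx0S', if_pos rfl, if_pos rfl, if_neg hx01, if_neg hx0S',
          hN0def, Matrix.updateRow_self]
        ring
      · by_cases hi1 : i = 1
        · subst hi1
          rw [if_neg h1S', if_neg hix0, if_pos rfl, if_neg hix0, if_pos rfl, if_neg h1S',
            hN0row _ hix0, hMdef, M_row_one]
          by_cases h : (1 : G) = j
          · rw [if_pos h, if_pos h]; ring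
          · rw [if_neg h, if_neg h]; ring
        · by_cases hiS : i ∈ S'
          · rw [if_pos hiS, if_neg hix0, if_neg hi1, if_pos hiS, if_neg hix0, if_neg hi1,
              if_pos hiS]
            rw [show M i j - M g j = (m : ℤ) * ((if j = i then 1 else 0) - (if j = g then 1 else 0)) by
              rw [hMdef]
              exact M_row_gen_sub hg hmax (hS'mem i hiS).1 (hS'mem i hiS).2 j]
            ring
          · rw [if_neg hiS, if_neg hix0, if_neg hi1, if_neg hiS, if_neg hix0, if_neg hi1,
              if_neg hiS, hN0row _ hix0]
            ring
    have hdetfact : M.det = ((n : ℤ) * (n : ℤ) * (m : ℤ) ^ S'.card) * R.det := by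
      rw [← hdetS', hNR, Matrix.det_mul_column]
      congr 1
      rw [hvdef]
      simp only []
      rw [Finset.prod_mul_distrib, Finset.prod_mul_distrib]
      rw [Finset.prod_ite_eq' Finset.univ x0 (fun _ => (n : ℤ)),
        Finset.prod_ite_eq' Finset.univ (1 : G) (fun _ => (n : ℤ)),
        Finset.prod_ite_mem Finset.univ S' (fun _ => (m : ℤ)),
        Finset.univ_inter, Finset.prod_const]
      simp
    -- step 4 : conclude divisibility
    have hcardS : m.totient ≤ S'.card + 1 := by
      have hgmem : g ∈ Finset.univ.filter
          (fun x : G => Subgroup.zpowers x = Subgroup.zpowers g) := by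
        simp
      have := Finset.card_erase_add_one hgmem
      rw [hS'def]
      rw [this]
      exact totient_le_card_gens hg
    obtain ⟨t, ht⟩ := hmdvd
    have hms : (n : ℤ) * (n : ℤ) * (m : ℤ) ^ S'.card * R.det
        = ((n : ℤ) * (m : ℤ) ^ (S'.card + 1)) * ((t : ℤ) * R.det) := by
      have : (n : ℤ) = (m : ℤ) * (t : ℤ) := by exact_mod_cast ht
      rw [pow_succ]
      nth_rewrite 2 [this]
      ring
    rw [hdetfact, hms]
    exact Dvd.dvd.mul_right (mul_dvd_mul_left _ (pow_dvd_pow _ hcardS)) _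
end

section
/- Let G be a finite nonabelian simple group and p a prime dividing |G|. Then G has at least p² − 1 elements of order p; equivalently, G has at least p + 1 distinct cyclic subgroups of order p. -/
open Equiv.Perm Mathlib

section Aux
variable {G : Type*} [Group G] [Finite G]

lemma frobenius_prime (p : ℕ) (hp : p.Prime) (hdvd : p ∣ Nat.card G) :
    p ∣ Nat.card {x : G // x ^ p = 1} := by
  classical
  have := Fintype.ofFinite G
  haveI : Fact p.Prime := ⟨hp⟩
  set X := vectorsProdEqOne G p with hX
  let f : Function.End X := fun v => VectorsProdEqOne.rotate v 1
  have hfk : ∀ (k : ℕ) (v : X), (f ^ k) v = VectorsProdEqOne.rotate v k := by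
    intro k
    induction k with
    | zero => intro v; exact (VectorsProdEqOne.rotate_zero v).symm
    | succ k ih =>
      intro v
      have h1 : (f ^ (k + 1)) v = (f ^ k) (f v) := by rw [pow_succ]; rfl
      rw [h1, ih, VectorsProdEqOne.rotate_rotate, Nat.add_comm]
  have hf : f ^ p ^ 1 = 1 := by
    funext v
    rw [pow_one, hfk p v]
    exact VectorsProdEqOne.rotate_length v
  have hmod := Equiv.Perm.card_fixedPoints_modEq (α := X) (f := f) (n := 1) hf
  have e : {x : G // x ^ p = 1} ≃ Function.fixedPoints f := by
    refine Equiv.ofBijective (fun x => ⟨⟨List.Vector.replicate p x.1, by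
        show (List.Vector.replicate p x.1).toList.prod = 1
        simp [List.Vector.replicate, x.2]⟩, by
        refine Subtype.ext (Subtype.ext ?_)
        exact List.rotate_replicate x.1 p 1⟩) ⟨?_, ?_⟩
    · intro x y hxy
      have h2 : List.replicate p x.1 = List.replicate p y.1 := by
        have := congrArg (fun w : Function.fixedPoints f => (w.1 : List.Vector G p).toList) hxy
        simpa [List.Vector.replicate] using this
      exact Subtype.ext (List.replicate_right_injective hp.ne_zero h2)
    · rintro ⟨⟨⟨l, hl⟩, hprod⟩, hfix⟩
      have hrot : l.rotate 1 = l := by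
        have := congrArg (fun w : X => ((w : X).1 : List.Vector G p).toList) hfix
        simpa [f, VectorsProdEqOne.rotate] using this
      obtain ⟨a, ha⟩ := List.rotate_one_eq_self_iff_eq_replicate.mp hrot
      rw [hl] at ha
      have hap : a ^ p = 1 := by
        have h3 : l.prod = 1 := hprod
        rw [ha, List.prod_replicate] at h3
        exact h3
      refine ⟨⟨a, hap⟩, ?_⟩
      refine Subtype.ext (Subtype.ext (Subtype.ext ?_))
      show List.replicate p a = l
      rw [ha]
  have hcard : Fintype.card X = Fintype.card G ^ (p - 1) := VectorsProdEqOne.card G p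
  have hX_dvd : p ∣ Fintype.card X := by
    rw [hcard]
    exact dvd_pow (by rwa [← Nat.card_eq_fintype_card]) (Nat.sub_ne_zero_of_lt hp.one_lt)
  have hfix_dvd : p ∣ Fintype.card (Function.fixedPoints f) :=
    Nat.modEq_zero_iff_dvd.mp (hmod.symm.trans (Nat.modEq_zero_iff_dvd.mpr hX_dvd))
  rw [Nat.card_congr e, Nat.card_eq_fintype_card]
  exact hfix_dvd

lemma fiber_card (p : ℕ) (hp : p.Prime) (H : Subgroup G) (hH : Nat.card H = p) :
    Nat.card {g : {g : G // orderOf g = p} // Subgroup.zpowers g.1 = H} = p - 1 := by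
  classical
  have := Fintype.ofFinite G
  haveI : Fact p.Prime := ⟨hp⟩
  have e : {g : {g : G // orderOf g = p} // Subgroup.zpowers g.1 = H} ≃
      {h : H // h ≠ (1 : H)} := by
    refine Equiv.ofBijective (fun g => ⟨⟨g.1.1, le_of_eq g.2 (Subgroup.mem_zpowers (g.1.1 : G))⟩, fun h1 => ?_⟩)
      ⟨?_, ?_⟩
    · have hg1 : g.1.1 = 1 := congrArg Subtype.val h1
      have hg2 := g.1.2
      rw [hg1, orderOf_one] at hg2
      exact hp.one_lt.ne hg2
    · intro a b hab
      have hv : a.1.1 = b.1.1 := congrArg (fun x : {h : H // h ≠ (1 : H)} => (x.1.1 : G)) hab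
      exact Subtype.ext (Subtype.ext hv)
    · rintro ⟨h, hne⟩
      have hord : orderOf (h : G) = p := by
        rw [Subgroup.orderOf_coe]
        refine orderOf_eq_prime ?_ hne
        rw [← hH]
        exact pow_card_eq_one'
      have hzp : Subgroup.zpowers (h : G) = H := by
        refine Subgroup.eq_of_le_of_card_ge (Subgroup.zpowers_le.mpr h.2) ?_
        rw [hH, Nat.card_zpowers, hord]
      exact ⟨⟨⟨(h : G), hord⟩, hzp⟩, rfl⟩
  rw [Nat.card_congr e, Nat.card_eq_fintype_card, Fintype.card_subtype_compl,
    Fintype.card_subtype_eq, ← Nat.card_eq_fintype_card, hH]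

lemma count_orderOf_eq (p : ℕ) (hp : p.Prime) :
    Nat.card {g : G // orderOf g = p} =
      Nat.card {H : Subgroup G // Nat.card H = p} * (p - 1) := by
  classical
  have := Fintype.ofFinite G
  have := Fintype.ofFinite (Subgroup G)
  let S := {H : Subgroup G // Nat.card H = p}
  let φ : {g : G // orderOf g = p} → S := fun g =>
    ⟨Subgroup.zpowers g.1, by rw [Nat.card_zpowers, g.2]⟩
  have h1 : Nat.card {g : G // orderOf g = p} = ∑ H : S, Fintype.card {g // φ g = H} := by
    rw [Nat.card_eq_fintype_card, ← Fintype.card_sigma,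
      Fintype.card_congr (Equiv.sigmaFiberEquiv φ)]
  have h2 : ∀ H : S, Fintype.card {g // φ g = H} = p - 1 := by
    intro H
    rw [← Nat.card_eq_fintype_card]
    rw [show Nat.card {g // φ g = H} =
        Nat.card {g : {g : G // orderOf g = p} // Subgroup.zpowers g.1 = H.1} from
      Nat.card_congr (Equiv.subtypeEquivRight (fun g => by
        constructor
        · intro h; exact congrArg Subtype.val h
        · intro h; exact Subtype.ext h))]
    exact fiber_card p hp H.1 H.2
  rw [h1, Finset.sum_congr rfl (fun H _ => h2 H), Finset.sum_const, smul_eq_mul,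
    Finset.card_univ, Nat.card_eq_fintype_card]

end Aux

/-- A finite nonabelian simple group has at least `p² − 1` elements of order `p`,
equivalently at least `p + 1` cyclic subgroups of order `p`, for every prime
divisor `p` of its order. -/
theorem simple_group_elements_of_order_p (G : Type*) [Group G] [Finite G]
    [IsSimpleGroup G] (hna : ∃ a b : G, a * b ≠ b * a)
    (p : ℕ) (hp : p.Prime) (hdvd : p ∣ Nat.card G) :
    p ^ 2 - 1 ≤ Nat.card {g : G // orderOf g = p} ∧
      p + 1 ≤ Nat.card {H : Subgroup G // Nat.card H = p} := by
  classical
  have := Fintype.ofFinite G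
  haveI : Fact p.Prime := ⟨hp⟩
  set k := Nat.card {H : Subgroup G // Nat.card H = p} with hkdef
  have hcount : Nat.card {g : G // orderOf g = p} = k * (p - 1) := count_orderOf_eq p hp
  have hsplit : Nat.card {x : G // x ^ p = 1} = 1 + k * (p - 1) := by
    have hiff : ∀ x : G, x ^ p = 1 ↔ (x = 1 ∨ orderOf x = p) := by
      intro x
      rw [← orderOf_dvd_iff_pow_eq_one, Nat.dvd_prime hp, orderOf_eq_one_iff]
    have hdisj : Disjoint (fun x : G => x = 1) (fun x : G => orderOf x = p) := by
      rw [disjoint_iff_inf_le]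
      rintro x ⟨hx1, hx2⟩
      rw [hx1, orderOf_one] at hx2
      exact absurd hx2.symm hp.one_lt.ne'
    rw [Nat.card_congr (Equiv.subtypeEquivRight hiff), Nat.card_eq_fintype_card,
      Fintype.card_subtype_or_disjoint _ _ hdisj, Fintype.card_subtype_eq,
      ← Nat.card_eq_fintype_card, hcount]
  have hfrob : p ∣ 1 + k * (p - 1) := hsplit ▸ frobenius_prime p hp hdvd
  obtain ⟨x, hx⟩ := exists_prime_orderOf_dvd_card' (G := G) p hdvd
  have hH : Nat.card (Subgroup.zpowers x) = p := by rw [Nat.card_zpowers, hx]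
  have hk1 : 1 ≤ k := by
    have : Nonempty {H : Subgroup G // Nat.card H = p} := ⟨⟨Subgroup.zpowers x, hH⟩⟩
    exact Nat.card_pos
  have hk2 : k ≠ 1 := by
    intro h1
    set H := Subgroup.zpowers x with hHdef
    have huniq : ∀ K : Subgroup G, Nat.card K = p → K = H := by
      intro K hK
      have hs := (Nat.card_eq_one_iff_unique.mp h1).1
      exact congrArg Subtype.val (@Subsingleton.elim _ hs ⟨K, hK⟩ ⟨H, hH⟩)
    have hnormal : H.Normal := by
      constructor
      intro n hn g
      have hmap : Subgroup.map (MulAut.conj g).toMonoidHom H = H := by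
        apply huniq
        rw [← hH]
        exact (Nat.card_congr
          (H.equivMapOfInjective _ (MulAut.conj g).injective).toEquiv).symm
      rw [← hmap]
      exact ⟨n, hn, rfl⟩
    rcases IsSimpleGroup.eq_bot_or_eq_top_of_normal H hnormal with hbot | htop
    · rw [hbot] at hH
      simp at hH
      exact hp.one_lt.ne' hH.symm
    · obtain ⟨a, b, hab⟩ := hna
      have ha : a ∈ H := htop ▸ Subgroup.mem_top a
      have hb : b ∈ H := htop ▸ Subgroup.mem_top b
      obtain ⟨m, hm⟩ := ha
      obtain ⟨n, hn⟩ := hb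
      apply hab
      rw [← hm, ← hn, ← zpow_add, ← zpow_add, add_comm]
  have hmod : k ≡ 1 [MOD p] := by
    rw [← ZMod.natCast_eq_natCast_iff]
    have h0 : ((1 + k * (p - 1) : ℕ) : ZMod p) = 0 :=
      (ZMod.natCast_eq_zero_iff _ _).mpr hfrob
    push_cast [Nat.cast_sub hp.one_le] at h0
    rw [ZMod.natCast_self] at h0
    push_cast
    linear_combination -h0
  have hkge : p + 1 ≤ k := by
    have hdvd1 : p ∣ k - 1 := (Nat.modEq_iff_dvd' hk1).mp hmod.symm
    have : k - 1 ≠ 0 := by omega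
    have := Nat.le_of_dvd (Nat.pos_of_ne_zero this) hdvd1
    omega
  refine ⟨?_, hkge⟩
  rw [hcount]
  obtain ⟨q, rfl⟩ : ∃ q, p = q + 1 := ⟨p - 1, (Nat.succ_pred_eq_of_pos hp.pos).symm⟩
  have h2 : q + 2 ≤ k := by omega
  have : (q + 1) ^ 2 = q * (q + 2) + 1 := by ring
  calc (q + 1) ^ 2 - 1 = q * (q + 2) := by omega
    _ ≤ q * k := Nat.mul_le_mul_left q h2
    _ = k * (q + 1 - 1) := by rw [Nat.mul_comm]; simp
end

section
/- Let G be a finite group and p the smallest prime such that κ(G) < p^(p−2). Then every prime divisor of |G| divides (p−1)!. -/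
open Finset

namespace PruferCore

variable {n : ℕ}

/-- the root vertex -/
def proot (n : ℕ) : Fin (n+2) := Fin.last (n+1)

/-- the Prüfer sequence extended to all of ℕ -/
def pseq (f : Fin n → Fin (n+2)) (k : ℕ) : Fin (n+2) :=
  if h : k < n then f ⟨k, h⟩ else proot n

/-- one step of decoding: pick the least vertex not forbidden -/
def leafStep (f : Fin n → Fin (n+2)) (i : ℕ) (prev : List (Fin (n+2))) : Fin (n+2) :=
  let F : Finset (Fin (n+2)) :=
    insert (proot n) (prev.toFinset ∪ (Finset.Ico i n).image (pseq f))
  if h : Fᶜ.Nonempty then Fᶜ.min' h else proot n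

/-- the list of leaves chosen so far -/
def leafList (f : Fin n → Fin (n+2)) : ℕ → List (Fin (n+2))
  | 0 => []
  | (i+1) => leafList f i ++ [leafStep f i (leafList f i)]

/-- the `i`-th leaf -/
def leaf (f : Fin n → Fin (n+2)) (i : ℕ) : Fin (n+2) := leafStep f i (leafList f i)

/-- removed vertices before step `i` -/
def rem (f : Fin n → Fin (n+2)) (i : ℕ) : Finset (Fin (n+2)) :=
  (Finset.range i).image (leaf f)

/-- forbidden set at step `i` -/
def forb (f : Fin n → Fin (n+2)) (i : ℕ) : Finset (Fin (n+2)) :=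
  insert (proot n) (rem f i ∪ (Finset.Ico i n).image (pseq f))

lemma leafList_toFinset (f : Fin n → Fin (n+2)) (i : ℕ) :
    (leafList f i).toFinset = rem f i := by
  induction i with
  | zero => simp [leafList, rem]
  | succ i ih =>
    rw [leafList, List.toFinset_append, ih]
    have h1 : [leafStep f i (leafList f i)].toFinset = {leaf f i} := by simp [leaf]
    have h2 : rem f (i+1) = insert (leaf f i) (rem f i) := by
      rw [rem, Finset.range_add_one, Finset.image_insert]; rfl
    rw [h1, h2, Finset.union_comm, ← Finset.insert_eq]

lemma leaf_def (f : Fin n → Fin (n+2)) (i : ℕ) :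
    leaf f i = if h : (forb f i)ᶜ.Nonempty then (forb f i)ᶜ.min' h else proot n := by
  unfold leaf leafStep
  rw [show insert (proot n) ((leafList f i).toFinset ∪ (Finset.Ico i n).image (pseq f))
      = forb f i by rw [leafList_toFinset]; rfl]

lemma forb_compl_nonempty (f : Fin n → Fin (n+2)) {i : ℕ} (hi : i ≤ n) :
    ((forb f i)ᶜ).Nonempty := by
  have hcard : (forb f i).card ≤ n + 1 := by
    calc (forb f i).card ≤ (rem f i ∪ (Finset.Ico i n).image (pseq f)).card + 1 :=
          Finset.card_insert_le _ _
    _ ≤ ((rem f i).card + ((Finset.Ico i n).image (pseq f)).card) + 1 :=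
          Nat.add_le_add_right (Finset.card_union_le _ _) 1
    _ ≤ (i + (n - i)) + 1 := by
          gcongr
          · exact (Finset.card_image_le).trans (by simp)
          · exact (Finset.card_image_le).trans (by simp)
    _ = n + 1 := by omega
  rw [← Finset.card_pos, Finset.card_compl]
  simp only [Fintype.card_fin]
  omega

lemma leaf_not_forb (f : Fin n → Fin (n+2)) {i : ℕ} (hi : i ≤ n) :
    leaf f i ∉ forb f i := by
  rw [leaf_def, dif_pos (forb_compl_nonempty f hi)]
  have := Finset.min'_mem _ (forb_compl_nonempty f hi)
  rwa [Finset.mem_compl] at this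

lemma leaf_ne_root (f : Fin n → Fin (n+2)) {i : ℕ} (hi : i ≤ n) :
    leaf f i ≠ proot n := fun h => leaf_not_forb f hi (h ▸ Finset.mem_insert_self _ _)

lemma leaf_ne_prev (f : Fin n → Fin (n+2)) {i j : ℕ} (hi : i ≤ n) (hj : j < i) :
    leaf f i ≠ leaf f j := by
  intro h
  exact leaf_not_forb f hi (Finset.mem_insert_of_mem (Finset.mem_union_left _
    (Finset.mem_image.mpr ⟨j, Finset.mem_range.mpr hj, h.symm⟩)))

lemma leaf_inj (f : Fin n → Fin (n+2)) {i j : ℕ} (hi : i ≤ n) (hj : j ≤ n)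
    (h : leaf f i = leaf f j) : i = j := by
  rcases lt_trichotomy i j with hlt | rfl | hlt
  · exact absurd h.symm (leaf_ne_prev f hj hlt)
  · rfl
  · exact absurd h (leaf_ne_prev f hi hlt)

lemma leaf_ne_suffix (f : Fin n → Fin (n+2)) {i k : ℕ} (hi : i ≤ n) (hik : i ≤ k)
    (hk : k < n) : leaf f i ≠ pseq f k := by
  intro h
  exact leaf_not_forb f hi (Finset.mem_insert_of_mem (Finset.mem_union_right _
    (Finset.mem_image.mpr ⟨k, Finset.mem_Ico.mpr ⟨hik, hk⟩, h.symm⟩)))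

lemma leaf_surj (f : Fin n → Fin (n+2)) {v : Fin (n+2)} (hv : v ≠ proot n) :
    ∃ i, i ≤ n ∧ leaf f i = v := by
  have himg : (Finset.range (n+1)).image (leaf f) = Finset.univ.erase (proot n) := by
    apply Finset.eq_of_subset_of_card_le
    · intro w hw
      rcases Finset.mem_image.mp hw with ⟨j, hj, rfl⟩
      exact Finset.mem_erase.mpr ⟨leaf_ne_root f (Nat.lt_succ_iff.mp (Finset.mem_range.mp hj)),
        Finset.mem_univ _⟩
    · rw [Finset.card_erase_of_mem (Finset.mem_univ _), Finset.card_univ, Fintype.card_fin,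
        Finset.card_image_of_injOn]
      · simp
      · intro a ha b hb hab
        exact leaf_inj f (Nat.lt_succ_iff.mp (Finset.mem_range.mp (Finset.mem_coe.mp ha)))
          (Nat.lt_succ_iff.mp (Finset.mem_range.mp (Finset.mem_coe.mp hb))) hab
  have : v ∈ (Finset.range (n+1)).image (leaf f) := by
    rw [himg]; exact Finset.mem_erase.mpr ⟨hv, Finset.mem_univ _⟩
    
  rcases Finset.mem_image.mp this with ⟨j, hj, rfl⟩
  exact ⟨j, Nat.lt_succ_iff.mp (Finset.mem_range.mp hj), rfl⟩

open scoped Classical in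
/-- the decoded parent function -/
noncomputable def parent (f : Fin n → Fin (n+2)) (v : Fin (n+2)) : Fin (n+2) :=
  if v = proot n then proot n
  else if v = leaf f n then proot n
  else if h : ∃ j, j < n ∧ leaf f j = v then pseq f (Nat.find h) else proot n

open scoped Classical in
/-- rank of vertices -/
noncomputable def rank (f : Fin n → Fin (n+2)) (v : Fin (n+2)) : ℕ :=
  if h : ∃ j, j ≤ n ∧ leaf f j = v then Nat.find h else n + 2

/-- depth of vertices -/
noncomputable def depth (f : Fin n → Fin (n+2)) (v : Fin (n+2)) : ℕ :=
  (n + 2) - rank f v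

lemma parent_root (f : Fin n → Fin (n+2)) : parent f (proot n) = proot n := by
  rw [parent, if_pos rfl]

lemma rank_root (f : Fin n → Fin (n+2)) : rank f (proot n) = n + 2 := by
  rw [rank, dif_neg]
  rintro ⟨j, hj, hleaf⟩
  exact leaf_ne_root f hj hleaf

lemma rank_leaf (f : Fin n → Fin (n+2)) {i : ℕ} (hi : i ≤ n) : rank f (leaf f i) = i := by
  classical
  rw [rank, dif_pos ⟨i, hi, rfl⟩]
  have h := Nat.find_spec (⟨i, hi, rfl⟩ : ∃ j, j ≤ n ∧ leaf f j = leaf f i)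
  exact leaf_inj f h.1 hi h.2

lemma parent_leaf_last (f : Fin n → Fin (n+2)) : parent f (leaf f n) = proot n := by
  rw [parent, if_neg (leaf_ne_root f le_rfl), if_pos rfl]

lemma parent_leaf (f : Fin n → Fin (n+2)) {i : ℕ} (hi : i < n) :
    parent f (leaf f i) = pseq f i := by
  classical
  rw [parent, if_neg (leaf_ne_root f hi.le),
    if_neg (fun h => absurd (leaf_inj f hi.le le_rfl h) hi.ne), dif_pos ⟨i, hi, rfl⟩]
  congr 1
  have h := Nat.find_spec (⟨i, hi, rfl⟩ : ∃ j, j < n ∧ leaf f j = leaf f i)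
  exact leaf_inj f h.1.le hi.le h.2

lemma rank_pseq_gt (f : Fin n → Fin (n+2)) {i : ℕ} (hi : i < n) : i < rank f (pseq f i) := by
  classical
  by_cases hr : pseq f i = proot n
  · rw [hr, rank_root]; omega
  · rcases leaf_surj f hr with ⟨j, hj, hleaf⟩
    rw [← hleaf, rank_leaf f hj]
    by_contra hle
    exact leaf_ne_suffix f hj (Nat.le_of_not_lt hle) hi hleaf

lemma depth_parent_lt (f : Fin n → Fin (n+2)) {v : Fin (n+2)} (hv : v ≠ proot n) :
    depth f (parent f v) < depth f v := by
  rcases leaf_surj f hv with ⟨i, hi, rfl⟩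
  rcases eq_or_lt_of_le hi with rfl | hilt
  · rw [parent_leaf_last, depth, depth, rank_root, rank_leaf f le_rfl]
    omega
  · rw [parent_leaf f hilt, depth, depth, rank_leaf f hi]
    have h1 := rank_pseq_gt f hilt
    have h2 : rank f (pseq f i) ≤ n + 2 := by
      classical
      rw [rank]
      split
      · next h => exact (Nat.find_min' h (Nat.find_spec h)).trans ((Nat.find_spec h).1.trans (by omega))
      · exact le_rfl
    omega

lemma depth_le (f : Fin n → Fin (n+2)) (v : Fin (n+2)) : depth f v ≤ n + 2 :=
  Nat.sub_le _ _

lemma xchar (f : Fin n → Fin (n+2)) {i : ℕ} (hi : i ≤ n) {v : Fin (n+2)}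
    (hv : v ≠ proot n) (hvr : v ∉ rem f i) :
    v ∈ (Finset.Ico i n).image (pseq f) ↔ ∃ w, w ∉ rem f i ∧ parent f w = v := by
  constructor
  · rintro h
    rcases Finset.mem_image.mp h with ⟨k, hk, rfl⟩
    rcases Finset.mem_Ico.mp hk with ⟨hik, hkn⟩
    refine ⟨leaf f k, ?_, parent_leaf f hkn⟩
    intro hmem
    rcases Finset.mem_image.mp hmem with ⟨j, hj, hleaf⟩
    have hjn : j < i := Finset.mem_range.mp hj
    have := leaf_inj f (hjn.trans_le hi).le hkn.le hleaf
    omega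
  · classical
    rintro ⟨w, hwr, rfl⟩
    by_cases h1 : w = proot n
    · exact absurd (h1 ▸ parent_root f) hv
    by_cases h2 : w = leaf f n
    · rw [h2, parent_leaf_last] at hv; exact absurd rfl hv
    rw [parent, if_neg h1, if_neg h2] at hv ⊢
    split at hv
    · next h =>
      rw [dif_pos h]
      have hspec := Nat.find_spec h
      set j := Nat.find h with hj
      refine Finset.mem_image.mpr ⟨j, Finset.mem_Ico.mpr ⟨?_, hspec.1⟩, rfl⟩
      by_contra hlt
      exact hwr (Finset.mem_image.mpr ⟨j, Finset.mem_range.mpr (Nat.lt_of_not_le hlt),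
        hspec.2⟩)
    · exact absurd rfl hv

lemma leaf_eq_of_parent_eq (f g : Fin n → Fin (n+2)) (hpar : parent f = parent g) :
    ∀ i, i ≤ n → leaf f i = leaf g i := by
  intro i
  induction i using Nat.strong_induction_on with
  | _ i IH =>
    intro hi
    have hrem : rem f i = rem g i := by
      unfold rem
      apply Finset.image_congr
      intro j hj
      exact IH j (Finset.mem_range.mp (Finset.mem_coe.mp hj))
        (((Finset.mem_range.mp (Finset.mem_coe.mp hj)).trans_le hi).le)
    have hforb : forb f i = forb g i := by
      unfold forb
      ext v
      simp only [Finset.mem_insert, Finset.mem_union]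
      by_cases h1 : v = proot n
      · simp [h1]
      by_cases h2 : v ∈ rem f i
      · simp [h2, hrem ▸ h2]
      · simp only [h1, false_or]
        rw [← hrem]
        simp only [h2, false_or]
        rw [xchar f hi h1 h2, xchar g hi h1 (hrem ▸ h2), hrem, hpar]
    rw [leaf_def, leaf_def, hforb]

lemma parent_injective : Function.Injective (parent (n := n)) := by
  intro f g hpar
  funext i
  have hleaf := leaf_eq_of_parent_eq f g hpar
  have h1 : parent f (leaf f (i : ℕ)) = pseq f i := parent_leaf f i.isLt
  have h2 : parent g (leaf g (i : ℕ)) = pseq g i := parent_leaf g i.isLt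
  rw [← hleaf (i : ℕ) i.isLt.le, ← hpar] at h2
  have : pseq f (i : ℕ) = pseq g (i : ℕ) := by rw [← h1, ← h2]
  rwa [pseq, pseq, dif_pos i.isLt, dif_pos i.isLt] at this

end PruferCore


namespace ParentTree

variable {V : Type*} 

theorem reach_root (Γ : SimpleGraph V) (P : V → V) (r : V) (d : V → ℕ)
    (hd : ∀ v, v ≠ r → d (P v) < d v)
    (hadj : ∀ x y, Γ.Adj x y ↔ x ≠ y ∧ (P x = y ∨ P y = x)) :
    ∀ v, Γ.Reachable v r := by
  have key : ∀ k v, d v ≤ k → Γ.Reachable v r := by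
    intro k
    induction k with
    | zero =>
      intro v hv
      by_cases h : v = r
      · subst h
        exact SimpleGraph.Reachable.refl _
      · exact absurd (hd v h) (by omega)
    | succ k ih =>
      intro v hv
      by_cases h : v = r
      · subst h
        exact SimpleGraph.Reachable.refl _
      · have hu := hd v h
        have hadjv : Γ.Adj v (P v) := (hadj v (P v)).mpr
          ⟨fun e => by rw [← e] at hu; omega, Or.inl rfl⟩
        exact hadjv.reachable.trans (ih (P v) (by omega))
  exact fun v => key (d v) v le_rfl

theorem noper (P : V → V) (r : V) (d : V → ℕ) (hr : P r = r)
    (hd : ∀ v, v ≠ r → d (P v) < d v) :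
    ∀ w, w ≠ r → ∀ k : ℕ, P^[k+1] w ≠ w := by
  intro w hw k heq
  by_cases hhit : ∃ j, P^[j] w = r
  · obtain ⟨j, hj⟩ := hhit
    have hper : ∀ t : ℕ, P^[(k+1)*t] w = w := by
      intro t
      induction t with
      | zero => simp
      | succ t ih =>
        rw [Nat.mul_succ, Function.iterate_add_apply, heq, ih]
    have hge : P^[(k+1)*j] w = r := by
      have : (k+1)*j = ((k+1)*j - j) + j := by
        have : j ≤ (k+1)*j := Nat.le_mul_of_pos_left j (Nat.succ_pos k)
        omega
      rw [this, Function.iterate_add_apply, hj, Function.iterate_fixed hr]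
    rw [hper j] at hge
    exact hw hge
  · push_neg at hhit
    have hdec : ∀ t : ℕ, d (P^[t] w) + t ≤ d w := by
      intro t
      induction t with
      | zero => simp
      | succ t ih =>
        have h2 := hd (P^[t] w) (hhit t)
        have h3 : P^[t+1] w = P (P^[t] w) := Function.iterate_succ_apply' P t w
        calc d (P^[t+1] w) + (t+1) = d (P (P^[t] w)) + (t+1) := by rw [h3]
          _ ≤ d (P^[t] w) + t := by omega
          _ ≤ d w := ih
    have := hdec (k+1)
    rw [heq] at this
    omega

theorem isTree_of_parent (Γ : SimpleGraph V) (P : V → V) (r : V) (d : V → ℕ)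
    (hr : P r = r) (hd : ∀ v, v ≠ r → d (P v) < d v)
    (hadj : ∀ x y, Γ.Adj x y ↔ x ≠ y ∧ (P x = y ∨ P y = x)) :
    Γ.IsTree := by
  have hreach := reach_root Γ P r d hd hadj
  constructor
  · rw [SimpleGraph.connected_iff]
    exact ⟨fun u v => (hreach u).trans (hreach v).symm, ⟨r⟩⟩
  · rw [SimpleGraph.isAcyclic_iff_forall_adj_isBridge]
    have key : ∀ x, Γ.Adj x (P x) →
        ¬ (Γ \ SimpleGraph.fromEdgeSet {s(x, P x)}).Reachable x (P x) := by
      intro x hadjx hreachx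
      have hxPx : x ≠ P x := ((hadj x (P x)).mp hadjx).1
      have hxr : x ≠ r := fun h => hxPx (by rw [h, hr])
      set D : V → Prop := fun w => ∃ k : ℕ, P^[k] w = x with hD
      have hstep : ∀ a b, (Γ \ SimpleGraph.fromEdgeSet {s(x, P x)}).Adj a b → D a → D b := by
        intro a b hab hda
        obtain ⟨k, hk⟩ := hda
        rw [SimpleGraph.sdiff_adj] at hab
        obtain ⟨hab1, hab2⟩ := hab
        rcases ((hadj a b).mp hab1).2 with hPa | hPb
        · cases k with
          | zero =>
            exfalso
            apply hab2
            rw [SimpleGraph.fromEdgeSet_adj]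
            simp only [Set.mem_singleton_iff]
            refine ⟨?_, ((hadj a b).mp hab1).1⟩
            simp only [Function.iterate_zero, id] at hk
            rw [hk] at hPa ⊢
            rw [hPa]
          | succ m =>
            refine ⟨m, ?_⟩
            rw [Function.iterate_succ_apply, hPa] at hk
            exact hk
        · exact ⟨k+1, by rw [Function.iterate_succ_apply, hPb, hk]⟩
      have hwalk : ∀ {c e : V} (_ : (Γ \ SimpleGraph.fromEdgeSet {s(x, P x)}).Walk c e),
          D c → D e := by
        intro c e w
        induction w with
        | nil => exact id
        | cons h p ih => exact fun hc => ih (hstep _ _ h hc)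
      obtain ⟨w⟩ := hreachx
      obtain ⟨k, hk⟩ := hwalk w ⟨0, rfl⟩
      exact noper P r d hr hd x hxr k (by rw [Function.iterate_succ_apply]; exact hk)
    intro a b hab
    rcases ((hadj a b).mp hab).2 with hPa | hPb
    · subst hPa
      exact SimpleGraph.isBridge_iff.mpr (key a hab)
    · subst hPb
      rw [Sym2.eq_swap]
      exact SimpleGraph.isBridge_iff.mpr (key b hab.symm)

theorem parent_unique (P P' : V → V) (r : V) (d : V → ℕ)
    (hr : P r = r) (hr' : P' r = r) (hd : ∀ v, v ≠ r → d (P v) < d v)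
    (himp : ∀ x y, (x ≠ y ∧ (P x = y ∨ P y = x)) → (x ≠ y ∧ (P' x = y ∨ P' y = x))) :
    P = P' := by
  have key : ∀ k v, d v ≤ k → P' v = P v := by
    intro k
    induction k with
    | zero =>
      intro v hv
      by_cases h : v = r
      · rw [h, hr, hr']
      · exact absurd (hd v h) (by omega)
    | succ k ih =>
      intro v hv
      by_cases h : v = r
      · rw [h, hr, hr']
      · have hltv := hd v h
        have hedge := himp v (P v) ⟨fun e => by rw [← e] at hltv; omega, Or.inl rfl⟩
        rcases hedge.2 with h1 | h2
        · exact h1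
        · by_cases hur : P v = r
          · rw [hur, hr'] at h2
            exact absurd h2.symm h
          · rw [ih (P v) (by omega)] at h2
            have := hd (P v) hur
            rw [h2] at this
            omega
  funext v
  exact (key (d v) v le_rfl).symm

end ParentTree

namespace Assembly

lemma zpowers_comparable {G : Type*} [Group G] [Finite G] {x g h : G}
    (hq : (orderOf x).Prime) (hg : g ∈ Subgroup.zpowers x) (hh : h ∈ Subgroup.zpowers x) :
    g ∈ Subgroup.zpowers h ∨ h ∈ Subgroup.zpowers g := by
  have hdvd : orderOf h ∣ orderOf x := orderOf_dvd_of_mem_zpowers hh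
  rcases hq.eq_one_or_self_of_dvd _ hdvd with h1 | horder
  · right
    rw [orderOf_eq_one_iff.mp h1]
    exact Subgroup.one_mem _
  · left
    have hle : Subgroup.zpowers h ≤ Subgroup.zpowers x := Subgroup.zpowers_le.mpr hh
    have heq : Subgroup.zpowers h = Subgroup.zpowers x :=
      Subgroup.eq_of_le_of_card_ge hle
        (by rw [Nat.card_zpowers, Nat.card_zpowers, horder])
    rw [heq]
    exact hg

variable {G : Type*} [Group G] [Finite G]

/-- embedding of `Fin (n+2)` into the group -/
def emb (x : G) (n : ℕ) (i : Fin (n+2)) : G := x ^ (i : ℕ)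

lemma emb_inj {x : G} {n : ℕ} (hn : n + 2 ≤ orderOf x) : Function.Injective (emb x n) := by
  intro i j hij
  exact Fin.ext (pow_injOn_Iio_orderOf (Set.mem_Iio.mpr (lt_of_lt_of_le i.isLt hn))
    (Set.mem_Iio.mpr (lt_of_lt_of_le j.isLt hn)) hij)

lemma emb_mem_zpowers (x : G) (n : ℕ) (i : Fin (n+2)) : emb x n i ∈ Subgroup.zpowers x :=
  Subgroup.pow_mem _ (Subgroup.mem_zpowers x) _

open scoped Classical in
noncomputable def FF (x : G) {n : ℕ} (f : Fin n → Fin (n+2)) (g : G) : G :=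
  if h : ∃ i, emb x n i = g then emb x n (PruferCore.parent f h.choose) else emb x n 0

open scoped Classical in
noncomputable def DD (x : G) {n : ℕ} (f : Fin n → Fin (n+2)) (g : G) : ℕ :=
  if h : ∃ i, emb x n i = g then PruferCore.depth f h.choose else n + 3

variable {x : G} {n : ℕ} (hn : n + 2 ≤ orderOf x)

lemma FF_emb (hn : n + 2 ≤ orderOf x) (f : Fin n → Fin (n+2)) (i : Fin (n+2)) :
    FF x f (emb x n i) = emb x n (PruferCore.parent f i) := by
  rw [FF, dif_pos ⟨i, rfl⟩]
  congr 2
  exact emb_inj hn (Exists.choose_spec (⟨i, rfl⟩ : ∃ j, emb x n j = emb x n i))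

lemma DD_emb (hn : n + 2 ≤ orderOf x) (f : Fin n → Fin (n+2)) (i : Fin (n+2)) :
    DD x f (emb x n i) = PruferCore.depth f i := by
  rw [DD, dif_pos ⟨i, rfl⟩]
  congr 1
  exact emb_inj hn (Exists.choose_spec (⟨i, rfl⟩ : ∃ j, emb x n j = emb x n i))

lemma FF_root (hn : n + 2 ≤ orderOf x) (f : Fin n → Fin (n+2)) :
    FF x f (emb x n (PruferCore.proot n)) = emb x n (PruferCore.proot n) := by
  rw [FF_emb hn, PruferCore.parent_root]

lemma DD_lt (hn : n + 2 ≤ orderOf x) (f : Fin n → Fin (n+2)) :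
    ∀ v, v ≠ emb x n (PruferCore.proot n) → DD x f (FF x f v) < DD x f v := by
  intro v hv
  by_cases h : ∃ i, emb x n i = v
  · obtain ⟨i, rfl⟩ := h
    rw [FF_emb hn, DD_emb hn, DD_emb hn]
    exact PruferCore.depth_parent_lt f (fun hi => hv (by rw [hi]))
  · rw [FF, dif_neg h, DD_emb hn]
    rw [DD, dif_neg h]
    have := PruferCore.depth_le f (0 : Fin (n+2))
    omega

lemma FF_adj (hn : n + 2 ≤ orderOf x) (hq : (orderOf x).Prime) (f : Fin n → Fin (n+2)) :
    ∀ a : G, FF x f a ≠ a → (powerGraph G).Adj a (FF x f a) := by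
  intro a hne
  show a ≠ FF x f a ∧ (a ∈ Subgroup.zpowers (FF x f a) ∨ FF x f a ∈ Subgroup.zpowers a)
  refine ⟨hne.symm, ?_⟩
  by_cases h : ∃ i, emb x n i = a
  · obtain ⟨i, rfl⟩ := h
    rw [FF_emb hn]
    exact zpowers_comparable hq (emb_mem_zpowers x n i) (emb_mem_zpowers x n _)
  · rw [FF, dif_neg h]
    right
    have : emb x n 0 = (1 : G) := by simp [emb]
    rw [this]
    exact Subgroup.one_mem _

/-- the spanning subgraph attached to a Prüfer sequence -/
noncomputable def HH (x : G) {n : ℕ} (hn : n + 2 ≤ orderOf x) (hq : (orderOf x).Prime)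
    (f : Fin n → Fin (n+2)) : (powerGraph G).Subgraph where
  verts := Set.univ
  Adj a b := a ≠ b ∧ (FF x f a = b ∨ FF x f b = a)
  adj_sub := by
    rintro a b ⟨hab, h | h⟩
    · have := FF_adj hn hq f a (by rw [h]; exact hab.symm)
      rwa [h] at this
    · have := FF_adj hn hq f b (by rw [h]; exact hab)
      rw [h] at this
      exact this.symm
  edge_vert _ := Set.mem_univ _
  symm := ⟨fun a b h => ⟨h.1.symm, h.2.symm⟩⟩

lemma HH_spanning (hq : (orderOf x).Prime) (f : Fin n → Fin (n+2)) :
    (HH x hn hq f).IsSpanning := fun _ => Set.mem_univ _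

lemma HH_isTree (hq : (orderOf x).Prime) (f : Fin n → Fin (n+2)) :
    (HH x hn hq f).coe.IsTree := by
  apply ParentTree.isTree_of_parent _ (fun a => ⟨FF x f a.1, Set.mem_univ _⟩)
    ⟨emb x n (PruferCore.proot n), Set.mem_univ _⟩ (fun a => DD x f a.1)
  · exact Subtype.ext (FF_root hn f)
  · intro v hv
    exact DD_lt hn f v.1 (fun h => hv (Subtype.ext h))
  · intro a b
    rw [SimpleGraph.Subgraph.coe_adj]
    show (a.1 ≠ b.1 ∧ (FF x f a.1 = b.1 ∨ FF x f b.1 = a.1)) ↔ _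
    constructor
    · rintro ⟨h1, h2⟩
      exact ⟨fun e => h1 (congrArg Subtype.val e),
        h2.imp (fun e => Subtype.ext e) (fun e => Subtype.ext e)⟩
    · rintro ⟨h1, h2⟩
      exact ⟨fun e => h1 (Subtype.ext e),
        h2.imp (fun e => congrArg Subtype.val e) (fun e => congrArg Subtype.val e)⟩

lemma HH_injective (hq : (orderOf x).Prime) :
    Function.Injective (fun f : Fin n → Fin (n+2) => HH x hn hq f) := by
  intro f g hfg
  have hfg' : HH x hn hq f = HH x hn hq g := hfg
  have hAdj : ∀ a b : G, (HH x hn hq f).Adj a b = (HH x hn hq g).Adj a b := by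
    rw [hfg']
    exact fun _ _ => rfl
  have hFF : FF x f = FF x g := by
    apply ParentTree.parent_unique (FF x f) (FF x g) (emb x n (PruferCore.proot n))
      (DD x f) (FF_root hn f) (FF_root hn g) (DD_lt hn f)
    intro a b hab
    have : (HH x hn hq f).Adj a b := hab
    rw [hAdj] at this
    exact this
  have hpar : PruferCore.parent f = PruferCore.parent g := by
    funext i
    apply emb_inj hn
    rw [← FF_emb hn f i, ← FF_emb hn g i, hFF]
  exact PruferCore.parent_injective hpar

instance : Finite ((powerGraph G).Subgraph) := by
  apply Finite.of_injective
    (fun H : (powerGraph G).Subgraph => (H.verts, H.Adj))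
  intro a b hab
  exact SimpleGraph.Subgraph.ext (congrArg Prod.fst hab) (congrArg Prod.snd hab)

theorem card_le_treeNumber (hq : (orderOf x).Prime) (hn : n + 2 ≤ orderOf x) :
    (n + 2) ^ n ≤ (powerGraph G).treeNumber := by
  have hinj : Function.Injective
      (fun f : Fin n → Fin (n+2) =>
        (⟨HH x hn hq f, HH_spanning hn hq f, HH_isTree hn hq f⟩ :
          {H : (powerGraph G).Subgraph // H.IsSpanning ∧ H.coe.IsTree})) := by
    intro f g hfg
    exact HH_injective hn hq (Subtype.mk_eq_mk.mp hfg)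
  calc (n+2)^n = Nat.card (Fin n → Fin (n+2)) := by
        simp [Nat.card_eq_fintype_card]
  _ ≤ _ := Nat.card_le_card_of_injective _ hinj

end Assembly


/-- If `p` is the smallest prime with `κ(G) < p ^ (p − 2)`, then every prime
divisor of `|G|` divides `(p − 1)!`. -/
theorem prime_divisors_dvd_factorial (G : Type*) [Group G] [Finite G] (p : ℕ)
    (hp : p.Prime) (hlt : (powerGraph G).treeNumber < p ^ (p - 2))
    (hmin : ∀ q : ℕ, q.Prime → q < p → ¬ (powerGraph G).treeNumber < q ^ (q - 2)) :
    ∀ q : ℕ, q.Prime → q ∣ Nat.card G → q ∣ (p - 1).factorial := by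
  intro q hq hdvd
  by_cases hqp : q < p
  · exact Nat.dvd_factorial hq.pos (by have := hp.two_le; omega)
  · exfalso
    push_neg at hqp
    have hft : Fintype G := Fintype.ofFinite G
    obtain ⟨x, hx⟩ := @exists_prime_orderOf_dvd_card G _ hft q (Fact.mk hq)
      (by rwa [← Nat.card_eq_fintype_card])
    have h2 := hp.two_le
    have hord : (p - 2) + 2 ≤ orderOf x := by rw [hx]; omega
    have hqord : (orderOf x).Prime := by rwa [hx]
    have hcard := Assembly.card_le_treeNumber (x := x) hqord hord
    have hpn : p ^ (p - 2) = ((p - 2) + 2) ^ (p - 2) := by congr 1; omega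
    rw [hpn] at hlt
    omega
end

section
/- Let G be a finite p-group (p prime) such that every connected component of the proper power graph P*(G) is a clique. Then the set of prime divisors of κ(G) is exactly {p} (assuming κ(G) > 1). -/
open Function

section Joyal

variable {V : Type*} [Fintype V] [LinearOrder V] (r : V)

/-- Simple fact: a periodic point other than `r` never reaches `r`. -/
lemma cyclic_not_reach {F : V → V} {v : V} (hFr : F r = r) (hv : v ≠ r)
    {m : ℕ} (hm : 0 < m) (hper : F^[m] v = v) {t : ℕ} (ht : F^[t] v = r) : False := by
  have hfix : ∀ M, (F^[m])^[M] v = v := fun M => Function.iterate_fixed hper M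
  have h1 : F^[m * (t + 1)] v = v := by
    rw [Function.iterate_mul]; exact hfix _
  have hge : t ≤ m * (t + 1) := by nlinarith
  have h2 : F^[m * (t + 1)] v = r := by
    have : m * (t + 1) = (m * (t + 1) - t) + t := by omega
    rw [this, Function.iterate_add_apply, ht]
    exact Function.iterate_fixed hFr _
  exact hv (h1 ▸ h2)

open scoped Classical in
/-- The set of periodic points (other than `r`) of `F`. -/
noncomputable def cycS (F : V → V) : Finset V :=
  Finset.univ.filter (fun v => v ≠ r ∧ ∃ m, 0 < m ∧ F^[m] v = v)

lemma mem_cycS {F : V → V} {v : V} :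
    v ∈ cycS r F ↔ v ≠ r ∧ ∃ m, 0 < m ∧ F^[m] v = v := by
  simp [cycS]

/-- every orbit hits the cyclic set or the root -/
lemma orbit_hits {F : V → V} (v : V) :
    ∃ i, F^[i] v ∈ cycS r F ∨ F^[i] v = r := by
  have : ¬ Function.Injective (fun i : Fin (Fintype.card V + 1) => F^[(i : ℕ)] v) := by
    intro h
    have := Fintype.card_le_of_injective _ h
    simp at this
  rw [Function.not_injective_iff] at this
  obtain ⟨i, j, hij, hne⟩ := this
  wlog hlt : (i : ℕ) < (j : ℕ) generalizing i j
  · exact this j i hij.symm (Ne.symm hne) (by omega)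
  refine ⟨i, ?_⟩
  by_cases hr : F^[(i:ℕ)] v = r
  · exact Or.inr hr
  · refine Or.inl ((mem_cycS (r := r)).2 ⟨hr, j - i, by omega, ?_⟩)
    have : F^[(j:ℕ)] v = F^[(j:ℕ) - (i:ℕ)] (F^[(i:ℕ)] v) := by
      rw [← Function.iterate_add_apply]; congr 1; omega
    rw [← hij] at this
    exact this.symm

lemma acy_of_cycS_empty {F : V → V} (h : cycS r F = ∅) (v : V) : ∃ n, F^[n] v = r := by
  obtain ⟨i, hi | hi⟩ := orbit_hits r (F := F) v
  · rw [h] at hi; simp at hi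
  · exact ⟨i, hi⟩

lemma cycS_closed {F : V → V} (hFr : F r = r) {x : V} (hx : x ∈ cycS r F) :
    F x ∈ cycS r F := by
  rw [mem_cycS (r := r)] at hx ⊢
  obtain ⟨hxr, m, hm, hper⟩ := hx
  constructor
  · intro hFx
    exact cyclic_not_reach r hFr hxr hm hper (t := 1) (by simpa using hFx)
  · exact ⟨m, hm, by rw [← Function.iterate_succ_apply, Function.iterate_succ_apply', hper]⟩

lemma cycS_inj {F : V → V} {x y : V} (hx : x ∈ cycS r F) (hy : y ∈ cycS r F)
    (h : F x = F y) : x = y := by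
  rw [mem_cycS (r := r)] at hx hy
  obtain ⟨hxr, m, hm, hmx⟩ := hx
  obtain ⟨hyr, l, hl, hly⟩ := hy
  have hxx : F^[m * l] x = x := by rw [Function.iterate_mul]; exact Function.iterate_fixed hmx l
  have hyy : F^[m * l] y = y := by
    rw [mul_comm, Function.iterate_mul]; exact Function.iterate_fixed hly m
  have h1 : 0 < m * l := by positivity
  calc x = F^[m*l] x := hxx.symm
    _ = F^[m*l - 1] (F x) := by rw [← Function.iterate_succ_apply]; congr 1; omega
    _ = F^[m*l - 1] (F y) := by rw [h]
    _ = F^[m*l] y := by rw [← Function.iterate_succ_apply]; congr 1; omega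
    _ = y := hyy

lemma cycS_surj {F : V → V} (hFr : F r = r) {x : V} (hx : x ∈ cycS r F) :
    ∃ c ∈ cycS r F, F c = x := by
  have hx' := hx
  rw [mem_cycS (r := r)] at hx'
  obtain ⟨hxr, m, hm, hmx⟩ := hx'
  refine ⟨F^[m-1] x, ?_, ?_⟩
  · have : ∀ t, F^[t] x ∈ cycS r F := by
      intro t; induction t with
      | zero => exact hx
      | succ n ih => rw [Function.iterate_succ_apply']; exact cycS_closed r hFr ih
    exact this _
  · have h2 : F^[m-1+1] x = x := by rwa [show m - 1 + 1 = m by omega]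
    rw [Function.iterate_succ_apply'] at h2
    exact h2

end Joyal

section Joyal2

variable {V : Type*} [Fintype V] [LinearOrder V] (r : V)

/-- sorted list of cyclic points -/
noncomputable def cl (F : V → V) : List V := (cycS r F).sort (· ≤ ·)

noncomputable def kk (F : V → V) : ℕ := (cl r F).length

/-- the `t`-th vertex of the replacement path -/
noncomputable def vf (F : V → V) (t : ℕ) : V := F ((cl r F).getD t r)

lemma cl_mem {F : V → V} {i : ℕ} (hi : i < kk r F) : (cl r F).getD i r ∈ cycS r F := by
  rw [List.getD_eq_getElem _ _ hi]
  exact (Finset.mem_sort _).1 (List.getElem_mem _)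

lemma cl_nodup (F : V → V) : (cl r F).Nodup := Finset.sort_nodup _ _

lemma cl_inj {F : V → V} {i j : ℕ} (hi : i < kk r F) (hj : j < kk r F)
    (h : (cl r F).getD i r = (cl r F).getD j r) : i = j := by
  rw [List.getD_eq_getElem _ _ hi, List.getD_eq_getElem _ _ hj] at h
  exact ((cl_nodup r F).getElem_inj_iff).1 h

lemma vf_mem {F : V → V} (hFr : F r = r) {i : ℕ} (hi : i < kk r F) : vf r F i ∈ cycS r F :=
  cycS_closed r hFr (cl_mem r hi)

lemma vf_inj {F : V → V} (hFr : F r = r) {i j : ℕ} (hi : i < kk r F) (hj : j < kk r F)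
    (h : vf r F i = vf r F j) : i = j :=
  cl_inj r hi hj (cycS_inj r (cl_mem r hi) (cl_mem r hj) h)

lemma vf_surj {F : V → V} (hFr : F r = r) {x : V} (hx : x ∈ cycS r F) :
    ∃ i, i < kk r F ∧ vf r F i = x := by
  obtain ⟨c, hc, hFc⟩ := cycS_surj r hFr hx
  have hcl : c ∈ cl r F := (Finset.mem_sort _).2 hc
  have hidx : (cl r F).idxOf c < kk r F := List.idxOf_lt_length_iff.2 hcl
  refine ⟨(cl r F).idxOf c, hidx, ?_⟩
  unfold vf
  rw [List.getD_eq_getElem _ _ hidx, List.getElem_idxOf hidx]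
  exact hFc

lemma vf_exists_iff {F : V → V} (hFr : F r = r) {x : V} :
    (∃ i, i < kk r F ∧ vf r F i = x) ↔ x ∈ cycS r F :=
  ⟨fun ⟨_, hi, he⟩ => he ▸ vf_mem r hFr hi, vf_surj r hFr⟩

open scoped Classical in
/-- the rewired function -/
noncomputable def psiF (F : V → V) : V → V := fun x =>
  if hx : ∃ i, i < kk r F ∧ vf r F i = x then
    (if Nat.find hx + 1 < kk r F then vf r F (Nat.find hx + 1) else r)
  else F x

noncomputable def psiB (F : V → V) : V := vf r F 0

lemma psiF_eq_of_not_mem {F : V → V} (hFr : F r = r) {x : V} (hx : x ∉ cycS r F) :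
    psiF r F x = F x := by
  unfold psiF
  rw [dif_neg]
  rw [vf_exists_iff r hFr]
  exact hx

lemma psiF_r {F : V → V} (hFr : F r = r) : psiF r F r = r := by
  rw [psiF_eq_of_not_mem r hFr (fun h => ((mem_cycS (r := r)).1 h).1 rfl), hFr]

lemma psiF_vf {F : V → V} (hFr : F r = r) {t : ℕ} (ht : t < kk r F) :
    psiF r F (vf r F t) = if t + 1 < kk r F then vf r F (t + 1) else r := by
  unfold psiF
  have hx : ∃ i, i < kk r F ∧ vf r F i = vf r F t := ⟨t, ht, rfl⟩
  rw [dif_pos hx]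
  have hfind : Nat.find hx = t := by
    rw [Nat.find_eq_iff]
    refine ⟨⟨ht, rfl⟩, fun s hs => ?_⟩
    rintro ⟨hs', he⟩
    exact absurd (vf_inj r hFr hs' ht he) (by omega)
  rw [hfind]


lemma psiB_orbit {F : V → V} (hFr : F r = r) {t : ℕ} (ht : t < kk r F) :
    (psiF r F)^[t] (psiB r F) = vf r F t := by
  induction t with
  | zero => rfl
  | succ n ih =>
    have hn : n < kk r F := by omega
    rw [Function.iterate_succ_apply', ih hn, psiF_vf r hFr hn, if_pos ht]

lemma psiB_orbit_end {F : V → V} (hFr : F r = r) (hk : 0 < kk r F) :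
    (psiF r F)^[kk r F] (psiB r F) = r := by
  have h1 : kk r F - 1 < kk r F := by omega
  have : kk r F = (kk r F - 1) + 1 := by omega
  rw [this, Function.iterate_succ_apply', psiB_orbit r hFr h1, psiF_vf r hFr h1,
    if_neg (by omega)]

lemma psiF_reach_cyc {F : V → V} (hFr : F r = r) :
    ∀ d t, t < kk r F → kk r F ≤ t + d → (psiF r F)^[d] (vf r F t) = r := by
  intro d
  induction d with
  | zero => intro t ht h; omega
  | succ n ih =>
    intro t ht h
    rw [Function.iterate_succ_apply, psiF_vf r hFr ht]
    by_cases h2 : t + 1 < kk r F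
    · rw [if_pos h2]; exact ih (t+1) h2 (by omega)
    · rw [if_neg h2]; exact Function.iterate_fixed (psiF_r r hFr) n

lemma psiF_reach {F : V → V} (hFr : F r = r) (v : V) : ∃ m, (psiF r F)^[m] v = r := by
  obtain ⟨i, hi⟩ := orbit_hits r (F := F) v
  induction i generalizing v with
  | zero =>
    simp only [Function.iterate_zero_apply] at hi
    rcases hi with hi | hi
    · obtain ⟨t, ht, hvt⟩ := vf_surj r hFr hi
      exact ⟨kk r F - t, hvt ▸ psiF_reach_cyc r hFr _ t ht (by omega)⟩
    · exact ⟨0, hi⟩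
  | succ n ih =>
    by_cases hv : v ∈ cycS r F
    · obtain ⟨t, ht, hvt⟩ := vf_surj r hFr hv
      exact ⟨kk r F - t, hvt ▸ psiF_reach_cyc r hFr _ t ht (by omega)⟩
    · by_cases hvr : v = r
      · exact ⟨0, hvr⟩
      · have hstep : psiF r F v = F v := psiF_eq_of_not_mem r hFr hv
        have : ∃ m, (psiF r F)^[m] (F v) = r := by
          apply ih
          rw [← Function.iterate_succ_apply]
          exact hi
        obtain ⟨m, hm⟩ := this
        exact ⟨m + 1, by rw [Function.iterate_succ_apply, hstep]; exact hm⟩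

lemma psiB_mem {F : V → V} (hFr : F r = r) (hk : 0 < kk r F) : psiB r F ∈ cycS r F :=
  vf_mem r hFr hk

lemma psiB_ne {F : V → V} (hFr : F r = r) (hk : 0 < kk r F) : psiB r F ≠ r :=
  ((mem_cycS (r := r)).1 (psiB_mem r hFr hk)).1

lemma kk_pos {F : V → V} (hne : ¬ ∀ v, ∃ n, F^[n] v = r) : 0 < kk r F := by
  rcases Nat.eq_zero_or_pos (kk r F) with h | h
  · exfalso
    apply hne
    apply acy_of_cycS_empty
    have : (cycS r F).card = 0 := by
      have := Finset.length_sort (α := V) (· ≤ ·) (s := cycS r F)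
      unfold kk cl at h
      omega
    exact Finset.card_eq_zero.1 this
  · exact h


open scoped Classical in
/-- number of steps from `b` to `r` -/
noncomputable def nOf (F' : V → V) (b : V) : ℕ :=
  if h : ∃ n, F'^[n] b = r then Nat.find h else 0

noncomputable def phiS (F' : V → V) (b : V) : Finset V :=
  (Finset.range (nOf r F' b)).image (fun t => F'^[t] b)

noncomputable def phiL (F' : V → V) (b : V) : List V := (phiS r F' b).sort (· ≤ ·)

open scoped Classical in
noncomputable def phiF (F' : V → V) (b : V) : V → V := fun x =>
  if x ∈ phiL r F' b then F'^[(phiL r F' b).idxOf x] b else F' x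

variable {F' : V → V} {b : V}

lemma nOf_spec (h : ∃ n, F'^[n] b = r) : F'^[nOf r F' b] b = r := by
  unfold nOf
  rw [dif_pos h]
  exact Nat.find_spec h

lemma nOf_min (h : ∃ n, F'^[n] b = r) {t : ℕ} (ht : t < nOf r F' b) : F'^[t] b ≠ r := by
  unfold nOf at ht
  rw [dif_pos h] at ht
  exact Nat.find_min h ht

lemma nOf_pos (h : ∃ n, F'^[n] b = r) (hb : b ≠ r) : 0 < nOf r F' b := by
  rcases Nat.eq_zero_or_pos (nOf r F' b) with h0 | h0
  · exfalso
    apply hb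
    have := nOf_spec r h
    rw [h0] at this
    simpa using this
  · exact h0

lemma orbit_inj (hFr : F' r = r) (h : ∃ n, F'^[n] b = r) :
    ∀ i j, i < nOf r F' b → j < nOf r F' b → F'^[i] b = F'^[j] b → i = j := by
  have key : ∀ i j, i < j → j < nOf r F' b → F'^[i] b = F'^[j] b → False := by
    intro i j hij hj he
    have hper : F'^[j - i] (F'^[i] b) = F'^[i] b := by
      rw [← Function.iterate_add_apply]
      rw [show j - i + i = j by omega]
      exact he.symm
    have hre : F'^[nOf r F' b - i] (F'^[i] b) = r := by
      rw [← Function.iterate_add_apply]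
      rw [show nOf r F' b - i + i = nOf r F' b by omega]
      exact nOf_spec r h
    exact cyclic_not_reach r hFr (nOf_min r h (by omega)) (by omega) hper hre
  intro i j hi hj he
  rcases lt_trichotomy i j with hl | hl | hl
  · exact absurd (key i j hl hj he) id
  · exact hl
  · exact absurd (key j i hl hi he.symm) id

lemma mem_phiS {x : V} : x ∈ phiS r F' b ↔ ∃ t, t < nOf r F' b ∧ F'^[t] b = x := by
  unfold phiS
  rw [Finset.mem_image]
  constructor
  · rintro ⟨t, ht, he⟩
    exact ⟨t, Finset.mem_range.1 ht, he⟩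
  · rintro ⟨t, ht, he⟩
    exact ⟨t, Finset.mem_range.2 ht, he⟩

lemma r_not_mem_phiS (h : ∃ n, F'^[n] b = r) : r ∉ phiS r F' b := by
  rw [mem_phiS]
  rintro ⟨t, ht, he⟩
  exact nOf_min r h ht he

lemma phiL_length (hFr : F' r = r) (h : ∃ n, F'^[n] b = r) :
    (phiL r F' b).length = nOf r F' b := by
  unfold phiL
  rw [Finset.length_sort]
  unfold phiS
  rw [Finset.card_image_of_injOn, Finset.card_range]
  intro i hi j hj he
  exact orbit_inj r hFr h i j (Finset.mem_range.1 hi) (Finset.mem_range.1 hj) he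

lemma mem_phiL {x : V} : x ∈ phiL r F' b ↔ x ∈ phiS r F' b := Finset.mem_sort _

lemma phiF_eq_of_not_mem {x : V} (hx : x ∉ phiS r F' b) : phiF r F' b x = F' x := by
  unfold phiF
  rw [if_neg (fun h => hx (mem_phiL r |>.1 h))]

lemma phiF_eq_of_mem {x : V} (hx : x ∈ phiS r F' b) :
    phiF r F' b x = F'^[(phiL r F' b).idxOf x] b := by
  unfold phiF
  rw [if_pos ((mem_phiL r).2 hx)]

lemma phiF_r (h : ∃ n, F'^[n] b = r) (hFr : F' r = r) : phiF r F' b r = r := by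
  rw [phiF_eq_of_not_mem r (r_not_mem_phiS r h), hFr]

lemma phiF_mem_of_mem (hFr : F' r = r) (h : ∃ n, F'^[n] b = r) {x : V} (hx : x ∈ phiS r F' b) :
    phiF r F' b x ∈ phiS r F' b := by
  rw [phiF_eq_of_mem r hx, mem_phiS]
  have hlt : (phiL r F' b).idxOf x < nOf r F' b := by
    rw [← phiL_length r hFr h]
    exact List.idxOf_lt_length_iff.2 ((mem_phiL r).2 hx)
  exact ⟨_, hlt, rfl⟩

lemma phiF_getD (hFr : F' r = r) (h : ∃ n, F'^[n] b = r) {t : ℕ}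
    (ht : t < (phiL r F' b).length) :
    phiF r F' b ((phiL r F' b).getD t r) = F'^[t] b := by
  have hmem : (phiL r F' b).getD t r ∈ phiS r F' b := by
    rw [List.getD_eq_getElem _ _ ht]
    exact (mem_phiL r).1 (List.getElem_mem _)
  rw [phiF_eq_of_mem r hmem]
  congr 1
  rw [List.getD_eq_getElem _ _ ht]
  exact List.Nodup.idxOf_getElem (Finset.sort_nodup _ _) _ _

lemma phiF_inj_on (hFr : F' r = r) (h : ∃ n, F'^[n] b = r) {x y : V}
    (hx : x ∈ phiS r F' b) (hy : y ∈ phiS r F' b)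
    (he : phiF r F' b x = phiF r F' b y) : x = y := by
  rw [phiF_eq_of_mem r hx, phiF_eq_of_mem r hy] at he
  have hlx : (phiL r F' b).idxOf x < nOf r F' b := by
    rw [← phiL_length r hFr h]; exact List.idxOf_lt_length_iff.2 ((mem_phiL r).2 hx)
  have hly : (phiL r F' b).idxOf y < nOf r F' b := by
    rw [← phiL_length r hFr h]; exact List.idxOf_lt_length_iff.2 ((mem_phiL r).2 hy)
  have := orbit_inj r hFr h _ _ hlx hly he
  have hx' := List.getElem_idxOf (x := x) (xs := phiL r F' b)
    (List.idxOf_lt_length_iff.2 ((mem_phiL r).2 hx))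
  have hy' := List.getElem_idxOf (x := y) (xs := phiL r F' b)
    (List.idxOf_lt_length_iff.2 ((mem_phiL r).2 hy))
  rw [← hx', ← hy']
  congr 1

lemma phiF_iter_mem (hFr : F' r = r) (h : ∃ n, F'^[n] b = r) {x : V}
    (hx : x ∈ phiS r F' b) (t : ℕ) : (phiF r F' b)^[t] x ∈ phiS r F' b := by
  induction t with
  | zero => exact hx
  | succ n ih => rw [Function.iterate_succ_apply']; exact phiF_mem_of_mem r hFr h ih

lemma phiF_cancel (hFr : F' r = r) (h : ∃ n, F'^[n] b = r) :
    ∀ (i : ℕ) (x y : V), x ∈ phiS r F' b → y ∈ phiS r F' b →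
    (phiF r F' b)^[i] x = (phiF r F' b)^[i] y → x = y := by
  intro i
  induction i with
  | zero => intro x y _ _ he; exact he
  | succ n ih =>
    intro x y hx hy he
    rw [Function.iterate_succ_apply', Function.iterate_succ_apply'] at he
    exact ih x y hx hy
      (phiF_inj_on r hFr h (phiF_iter_mem r hFr h hx n) (phiF_iter_mem r hFr h hy n) he)


lemma phiS_subset_cycS (hFr : F' r = r) (h : ∃ n, F'^[n] b = r) {x : V}
    (hx : x ∈ phiS r F' b) : x ∈ cycS r (phiF r F' b) := by
  rw [mem_cycS (r := r)]
  constructor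
  · intro hxr
    exact r_not_mem_phiS r h (hxr ▸ hx)
  · -- pigeonhole on the orbit of x under phiF
    have : ¬ Function.Injective
        (fun i : Fin (Fintype.card V + 1) => (phiF r F' b)^[(i : ℕ)] x) := by
      intro hinj
      have := Fintype.card_le_of_injective _ hinj
      simp at this
    rw [Function.not_injective_iff] at this
    obtain ⟨i, j, hij, hne⟩ := this
    wlog hlt : (i : ℕ) < (j : ℕ) generalizing i j
    · exact this j i hij.symm (Ne.symm hne) (by omega)
    refine ⟨(j : ℕ) - (i : ℕ), by omega, ?_⟩
    apply phiF_cancel r hFr h (i : ℕ) _ _ (phiF_iter_mem r hFr h hx _) hx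
    rw [← Function.iterate_add_apply]
    rw [show (i:ℕ) + ((j:ℕ) - (i:ℕ)) = (j:ℕ) by omega]
    exact hij.symm

lemma cycS_subset_phiS (hFr : F' r = r) (hre : ∀ v, ∃ n, F'^[n] v = r) (hb : b ≠ r) {x : V}
    (hx : x ∈ cycS r (phiF r F' b)) : x ∈ phiS r F' b := by
  have h : ∃ n, F'^[n] b = r := hre b
  obtain ⟨hxr, m, hm, hper⟩ := (mem_cycS (r := r)).1 hx
  by_cases hexists : ∃ t, (phiF r F' b)^[t] x ∈ phiS r F' b
  · obtain ⟨t, ht⟩ := hexists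
    have h1 : (phiF r F' b)^[m * (t+1)] x = x := by
      rw [Function.iterate_mul]; exact Function.iterate_fixed hper _
    have h2 : (phiF r F' b)^[m * (t+1)] x ∈ phiS r F' b := by
      have haux : t ≤ m * (t+1) := by nlinarith
      rw [show m * (t+1) = (m * (t+1) - t) + t by omega]
      rw [Function.iterate_add_apply]
      exact phiF_iter_mem r hFr h ht _
    rwa [h1] at h2
  · push_neg at hexists
    have hagree : ∀ t, (phiF r F' b)^[t] x = F'^[t] x := by
      intro t
      induction t with
      | zero => rfl
      | succ n ih =>
        rw [Function.iterate_succ_apply', Function.iterate_succ_apply', ih, ← ih,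
          phiF_eq_of_not_mem r (hexists n), ih]
    obtain ⟨s, hs⟩ := hre x
    exact absurd (cyclic_not_reach r (phiF_r r h hFr) hxr hm hper
      (t := s) (by rw [hagree]; exact hs)) id

lemma cycS_phiF_eq (hFr : F' r = r) (hre : ∀ v, ∃ n, F'^[n] v = r) (hb : b ≠ r) :
    cycS r (phiF r F' b) = phiS r F' b :=
  Finset.ext fun x => ⟨cycS_subset_phiS r hFr hre hb,
    phiS_subset_cycS r hFr (hre b)⟩

lemma phiF_not_acy (hFr : F' r = r) (hre : ∀ v, ∃ n, F'^[n] v = r) (hb : b ≠ r) :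
    ¬ ∀ v, ∃ n, (phiF r F' b)^[n] v = r := by
  intro hacy
  have hbmem : b ∈ phiS r F' b := by
    rw [mem_phiS]
    exact ⟨0, nOf_pos r (hre b) hb, rfl⟩
  have := phiS_subset_cycS r hFr (hre b) hbmem
  obtain ⟨hbr, m, hm, hper⟩ := (mem_cycS (r := r)).1 this
  obtain ⟨t, ht⟩ := hacy b
  exact cyclic_not_reach r (phiF_r r (hre b) hFr) hbr hm hper ht


lemma nOf_eq_of {k : ℕ} (hspec : F'^[k] b = r) (hmin : ∀ t, t < k → F'^[t] b ≠ r) :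
    nOf r F' b = k := by
  unfold nOf
  rw [dif_pos ⟨k, hspec⟩]
  rw [Nat.find_eq_iff]
  exact ⟨hspec, fun t ht => hmin t ht⟩

lemma phi_psi {F : V → V} (hFr : F r = r) (hne : ¬ ∀ v, ∃ n, F^[n] v = r) :
    phiF r (psiF r F) (psiB r F) = F := by
  have hk : 0 < kk r F := kk_pos r hne
  have hnof : nOf r (psiF r F) (psiB r F) = kk r F := by
    apply nOf_eq_of r (psiB_orbit_end r hFr hk)
    intro t ht
    rw [psiB_orbit r hFr ht]
    exact ((mem_cycS (r := r)).1 (vf_mem r hFr ht)).1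
  have hS : phiS r (psiF r F) (psiB r F) = cycS r F := by
    ext x
    rw [mem_phiS, hnof]
    constructor
    · rintro ⟨t, ht, he⟩
      rw [psiB_orbit r hFr ht] at he
      exact (vf_exists_iff r hFr).1 ⟨t, ht, he⟩
    · intro hx
      obtain ⟨t, ht, he⟩ := vf_surj r hFr hx
      exact ⟨t, ht, by rw [psiB_orbit r hFr ht]; exact he⟩
  have hL : phiL r (psiF r F) (psiB r F) = cl r F := by
    unfold phiL cl
    rw [hS]
  funext x
  by_cases hx : x ∈ cycS r F
  · have hx' : x ∈ phiS r (psiF r F) (psiB r F) := by rw [hS]; exact hx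
    rw [phiF_eq_of_mem r hx', hL]
    have hxl : x ∈ cl r F := (Finset.mem_sort _).2 hx
    have hidx : (cl r F).idxOf x < kk r F := List.idxOf_lt_length_iff.2 hxl
    rw [psiB_orbit r hFr hidx]
    unfold vf
    rw [List.getD_eq_getElem _ _ hidx, List.getElem_idxOf hidx]
  · have hx' : x ∉ phiS r (psiF r F) (psiB r F) := by rw [hS]; exact hx
    rw [phiF_eq_of_not_mem r hx', psiF_eq_of_not_mem r hFr hx]

lemma psi_phi_vf (h1 : F' r = r) (h2 : ∀ v, ∃ n, F'^[n] v = r) (hb : b ≠ r) :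
    (cycS r (phiF r F' b) = phiS r F' b) ∧
    (kk r (phiF r F' b) = nOf r F' b) ∧
    (∀ t, t < nOf r F' b → vf r (phiF r F' b) t = F'^[t] b) := by
  have hre := h2 b
  have hS := cycS_phiF_eq r h1 h2 hb
  have hL : cl r (phiF r F' b) = phiL r F' b := by
    unfold cl phiL
    rw [hS]
  have hk : kk r (phiF r F' b) = nOf r F' b := by
    unfold kk
    rw [hL]
    exact phiL_length r h1 hre
  refine ⟨hS, hk, fun t ht => ?_⟩
  unfold vf
  rw [hL]
  exact phiF_getD r h1 hre (by rw [phiL_length r h1 hre]; exact ht)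

lemma psi_phi_b (h1 : F' r = r) (h2 : ∀ v, ∃ n, F'^[n] v = r) (hb : b ≠ r) :
    psiB r (phiF r F' b) = b := by
  obtain ⟨hS, hk, hvf⟩ := psi_phi_vf r h1 h2 hb
  have h0 : 0 < nOf r F' b := nOf_pos r (h2 b) hb
  unfold psiB
  rw [hvf 0 h0]
  rfl

lemma psi_phi (h1 : F' r = r) (h2 : ∀ v, ∃ n, F'^[n] v = r) (hb : b ≠ r) :
    psiF r (phiF r F' b) = F' := by
  obtain ⟨hS, hk, hvf⟩ := psi_phi_vf r h1 h2 hb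
  have hre := h2 b
  have hF0r : phiF r F' b r = r := phiF_r r hre h1
  funext x
  by_cases hx : ∃ i, i < kk r (phiF r F' b) ∧ vf r (phiF r F' b) i = x
  · unfold psiF
    rw [dif_pos hx]
    set t := Nat.find hx with hts
    obtain ⟨ht, hvt⟩ := Nat.find_spec hx
    have htn : t < nOf r F' b := by rw [← hk]; exact ht
    have hxe : x = F'^[t] b := by rw [← hvt, hvf t htn]
    have hF'x : F' x = F'^[t+1] b := by
      rw [hxe]
      exact (Function.iterate_succ_apply' F' t b).symm
    by_cases ht1 : t + 1 < kk r (phiF r F' b)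
    · rw [if_pos ht1, hF'x, hvf (t+1) (by rw [← hk]; exact ht1)]
    · rw [if_neg ht1, hF'x]
      have : t + 1 = nOf r F' b := by omega
      rw [this]
      exact (nOf_spec r hre).symm
  · rw [psiF_eq_of_not_mem r hF0r (fun hc => hx ((vf_exists_iff r hF0r).2 hc))]
    have hx' : x ∉ phiS r F' b := by
      rw [← hS]
      intro hc
      exact hx ((vf_exists_iff r hF0r).2 hc)
    exact phiF_eq_of_not_mem r hx'

open scoped Classical in
noncomputable def joyalEquiv :
    {F : V → V // F r = r} ≃ {F : V → V // F r = r ∧ ∀ v, ∃ n, F^[n] v = r} × V where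
  toFun FF := if h : ∀ v, ∃ n, FF.1^[n] v = r then (⟨FF.1, FF.2, h⟩, r)
    else (⟨psiF r FF.1, psiF_r r FF.2, psiF_reach r FF.2⟩, psiB r FF.1)
  invFun P := if hb : P.2 = r then ⟨P.1.1, P.1.2.1⟩
    else ⟨phiF r P.1.1 P.2, phiF_r r (P.1.2.2 P.2) P.1.2.1⟩
  left_inv := by
    rintro ⟨F, hF⟩
    dsimp only
    by_cases h : ∀ v, ∃ n, F^[n] v = r
    · rw [dif_pos h, dif_pos rfl]
    · rw [dif_neg h, dif_neg (psiB_ne r hF (kk_pos r h))]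
      exact Subtype.ext (phi_psi r hF h)
  right_inv := by
    rintro ⟨⟨F', h1, h2⟩, b⟩
    dsimp only
    by_cases hb : b = r
    · rw [dif_pos hb, dif_pos h2, hb]
    · rw [dif_neg hb, dif_neg (phiF_not_acy r h1 h2 hb)]
      exact Prod.ext (Subtype.ext (psi_phi r h1 h2 hb)) (psi_phi_b r h1 h2 hb)

open scoped Classical in
noncomputable def rootedFunEquiv : {F : V → V // F r = r} ≃ ({v : V // v ≠ r} → V) where
  toFun FF := fun v => FF.1 v.1
  invFun f := ⟨fun v => if h : v = r then r else f ⟨v, h⟩, dif_pos rfl⟩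
  left_inv := by
    rintro ⟨F, hF⟩
    apply Subtype.ext
    funext v
    dsimp only
    by_cases h : v = r
    · rw [dif_pos h, h, hF]
    · rw [dif_neg h]
  right_inv := by
    intro f
    funext v
    exact dif_neg v.2

lemma card_rooted_fun :
    Nat.card {F : V → V // F r = r} = Fintype.card V ^ (Fintype.card V - 1) := by
  classical
  rw [Nat.card_congr (rootedFunEquiv r), Nat.card_fun, Nat.card_eq_fintype_card,
    Nat.card_eq_fintype_card]
  congr 1
  have : Fintype.card {v : V // ¬ v = r} = Fintype.card V - Fintype.card {v : V // v = r} :=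
    Fintype.card_subtype_compl _
  rw [Fintype.card_subtype_eq] at this
  exact this

/-- **Joyal-style count**: the number of rooted "forest functions" times `|V|`
equals `|V| ^ (|V| - 1)`. -/
theorem joyal_card :
    Nat.card {F : V → V // F r = r ∧ ∀ v, ∃ n, F^[n] v = r} * Fintype.card V =
      Fintype.card V ^ (Fintype.card V - 1) := by
  have := Nat.card_congr (joyalEquiv r)
  rw [Nat.card_prod, Nat.card_eq_fintype_card (α := V)] at this
  rw [← this, card_rooted_fun]

end Joyal2


section NoFin
variable {V : Type*}

/-- A periodic point other than `r` never reaches `r`. -/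
lemma cyclic_not_reach' {F : V → V} {v : V} (hFr : F r = r) (hv : v ≠ r)
    {m : ℕ} (hm : 0 < m) (hper : F^[m] v = v) {t : ℕ} (ht : F^[t] v = r) : False := by
  have hfix : ∀ M, (F^[m])^[M] v = v := fun M => Function.iterate_fixed hper M
  have h1 : F^[m * (t + 1)] v = v := by
    rw [Function.iterate_mul]; exact hfix _
  have h2 : F^[m * (t + 1)] v = r := by
    have hge : t ≤ m * (t + 1) := by nlinarith
    rw [show m * (t + 1) = (m * (t + 1) - t) + t by omega, Function.iterate_add_apply, ht]
    exact Function.iterate_fixed hFr _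
  exact hv (h1 ▸ h2)

end NoFin

section TreeFn

open SimpleGraph

variable {W : Type*}

def funcAdj (r : W) (F : W → W) (x y : W) : Prop :=
  (x ≠ r ∧ F x = y) ∨ (y ≠ r ∧ F y = x)

lemma funcAdj_symm {r : W} {F : W → W} {x y : W} (h : funcAdj r F x y) : funcAdj r F y x :=
  h.symm

lemma reach_no_fix {r : W} {F : W → W} (h3 : ∀ w, ∃ n, F^[n] w = r) {w : W} (hw : w ≠ r) :
    F w ≠ w := by
  intro hfix
  obtain ⟨n, hn⟩ := h3 w
  rw [Function.iterate_fixed hfix n] at hn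
  exact hw hn

lemma funcAdj_irrefl {r : W} {F : W → W} (h3 : ∀ w, ∃ n, F^[n] w = r) (x : W) :
    ¬ funcAdj r F x x := by
  rintro (⟨hx, hfx⟩ | ⟨hx, hfx⟩) <;> exact reach_no_fix h3 hx hfx

def funcG (r : W) (F : W → W) (h3 : ∀ w, ∃ n, F^[n] w = r) : SimpleGraph W where
  Adj := funcAdj r F
  symm := ⟨fun _ _ h => funcAdj_symm h⟩
  loopless := ⟨fun x h => funcAdj_irrefl h3 x h⟩

open scoped Classical in
noncomputable def dep (r : W) {F : W → W} (h3 : ∀ w, ∃ n, F^[n] w = r) (w : W) : ℕ :=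
  Nat.find (h3 w)

lemma dep_spec (r : W) {F : W → W} (h3 : ∀ w, ∃ n, F^[n] w = r) (w : W) :
    F^[dep r h3 w] w = r := by
  classical
  unfold dep
  exact Nat.find_spec (h3 w)

lemma dep_min (r : W) {F : W → W} (h3 : ∀ w, ∃ n, F^[n] w = r) {w : W} {t : ℕ}
    (ht : t < dep r h3 w) : F^[t] w ≠ r := by
  classical
  unfold dep at ht
  exact Nat.find_min (h3 w) ht

lemma dep_eq_zero_iff (r : W) {F : W → W} (h3 : ∀ w, ∃ n, F^[n] w = r) {w : W} :
    dep r h3 w = 0 ↔ w = r := by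
  constructor
  · intro h
    have := dep_spec r h3 w
    rw [h] at this
    simpa using this
  · intro h
    rcases Nat.eq_zero_or_pos (dep r h3 w) with h0 | h0
    · exact h0
    · exact absurd (by simpa using h) (dep_min r h3 (t := 0) h0)

lemma dep_parent (r : W) {F : W → W} (h3 : ∀ w, ∃ n, F^[n] w = r) {w : W} (hw : w ≠ r) :
    dep r h3 (F w) + 1 = dep r h3 w := by
  have hpos : 0 < dep r h3 w := by
    rcases Nat.eq_zero_or_pos (dep r h3 w) with h | h
    · exact absurd ((dep_eq_zero_iff r h3).1 h) hw
    · exact h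
  have hle : dep r h3 (F w) ≤ dep r h3 w - 1 := by
    by_contra hlt
    push_neg at hlt
    apply dep_min r h3 (show dep r h3 w - 1 < dep r h3 (F w) by omega)
    have := dep_spec r h3 w
    rwa [show dep r h3 w = (dep r h3 w - 1) + 1 by omega, Function.iterate_succ_apply] at this
  have hge : dep r h3 w ≤ dep r h3 (F w) + 1 := by
    by_contra hlt
    push_neg at hlt
    apply dep_min r h3 (show dep r h3 (F w) + 1 < dep r h3 w by omega)
    rw [Function.iterate_succ_apply]
    exact dep_spec r h3 (F w)
  omega

lemma funcG_preconnected (r : W) (F : W → W) (h3 : ∀ w, ∃ n, F^[n] w = r) :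
    ∀ w, (funcG r F h3).Reachable w r := by
  have key : ∀ n w, dep r h3 w ≤ n → (funcG r F h3).Reachable w r := by
    intro n
    induction n with
    | zero =>
      intro w hw
      rw [Nat.le_zero, dep_eq_zero_iff r h3] at hw
      subst hw
      exact Reachable.refl _
    | succ n ih =>
      intro w hw
      by_cases hwr : w = r
      · subst hwr
        exact Reachable.refl w
      · have hadj : (funcG r F h3).Adj w (F w) := Or.inl ⟨hwr, rfl⟩
        have hdep : dep r h3 (F w) ≤ n := by
          have := dep_parent r h3 hwr
          omega
        exact hadj.reachable.trans (ih (F w) hdep)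
  exact fun w => key (dep r h3 w) w le_rfl

lemma funcG_connected (r : W) (F : W → W) (h3 : ∀ w, ∃ n, F^[n] w = r) :
    (funcG r F h3).Connected := by
  haveI : Nonempty W := ⟨r⟩
  exact ⟨fun a b =>
    (funcG_preconnected r F h3 a).trans (funcG_preconnected r F h3 b).symm⟩

lemma funcG_dep_adj (r : W) {F : W → W} (h3 : ∀ w, ∃ n, F^[n] w = r) {x y : W}
    (h : (funcG r F h3).Adj x y) : dep r h3 y + 1 = dep r h3 x ∨ dep r h3 x + 1 = dep r h3 y := by
  rcases h with ⟨hx, he⟩ | ⟨hy, he⟩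
  · exact Or.inl (he ▸ dep_parent r h3 hx)
  · exact Or.inr (he ▸ dep_parent r h3 hy)

lemma funcG_acyclic (r : W) (F : W → W) (h3 : ∀ w, ∃ n, F^[n] w = r) :
    (funcG r F h3).IsAcyclic := by
  intro v c hc
  classical
  -- pick a vertex of maximal depth on the cycle
  obtain ⟨u, hu', hmax'⟩ := Finset.exists_max_image c.support.toFinset (dep r h3)
    ⟨v, List.mem_toFinset.2 c.start_mem_support⟩
  have hu : u ∈ c.support := List.mem_toFinset.1 hu'
  have hmax : ∀ x ∈ c.support, dep r h3 x ≤ dep r h3 u :=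
    fun x hx => hmax' x (List.mem_toFinset.2 hx)
  set c' := c.rotate u hu with hc'def
  have hc' : c'.IsCycle := hc.rotate hu
  have hsub : ∀ x, x ∈ c'.support → x ∈ c.support := by
    intro x hx
    have hrot := c.support_rotate u hu
    rcases eq_or_ne x u with rfl | hne
    · exact hu
    · have hx2 : x ∈ u :: c'.support.tail := by
        rw [← c'.support_eq_cons]
        exact hx
      have hx' : x ∈ c'.support.tail := by
        rcases List.mem_cons.1 hx2 with h | h
        · exact absurd h hne
        · exact h
      have : x ∈ c.support.tail := (hrot.mem_iff).1 hx'
      have hcons : c.support = v :: c.support.tail := c.support_eq_cons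
      rw [hcons]
      exact List.mem_cons_of_mem _ this
  have hlen : 3 ≤ c'.length := hc'.three_le_length
  set x := c'.getVert 1 with hxdef
  set y := c'.getVert (c'.length - 1) with hydef
  have adjx : (funcG r F h3).Adj u x := by
    have := c'.adj_getVert_succ (i := 0) (by omega)
    rwa [SimpleGraph.Walk.getVert_zero] at this
  have adjy : (funcG r F h3).Adj y u := by
    have := c'.adj_getVert_succ (i := c'.length - 1) (by omega)
    rw [show c'.length - 1 + 1 = c'.length by omega, SimpleGraph.Walk.getVert_length] at this
    exact this
  have hget : ∀ (i : ℕ) (hi : i < c'.support.length), c'.support[i] = c'.getVert i := by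
    have : ∀ (a b : W) (p : (funcG r F h3).Walk a b) (i : ℕ) (hi : i < p.support.length),
        p.support[i] = p.getVert i := by
      intro a b p
      induction p with
      | nil => intro i hi; simp at hi; subst hi; simp
      | cons h q ih =>
        intro i hi
        match i with
        | 0 => simp
        | (n+1) =>
          have hi' : n < q.support.length := by
            rw [SimpleGraph.Walk.support_cons, List.length_cons] at hi
            omega
          simp only [SimpleGraph.Walk.support_cons, SimpleGraph.Walk.getVert_cons_succ,
            List.getElem_cons_succ]
          exact ih n hi'
    exact this u u c'
  have hsupl : c'.support.length = c'.length + 1 := c'.length_support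
  have hmem : ∀ (i : ℕ), i < c'.length + 1 → c'.getVert i ∈ c'.support := by
    intro i hi
    rw [← hget i (by omega)]
    exact List.getElem_mem _
  have hxy : x ≠ y := by
    have htail : c'.support.tail.Nodup := hc'.2
    have h1 : c'.support.tail.length = c'.length := by
      have h := hsupl
      have h2 := List.length_tail (l := c'.support)
      omega
    have hgetT : ∀ (i : ℕ) (hi : i < c'.support.tail.length),
        c'.support.tail[i] = c'.getVert (i+1) := by
      intro i hi
      rw [List.getElem_tail]
      exact hget (i+1) (by omega)
    intro heq
    have e0 : c'.support.tail[0]'(by omega) = x := hgetT 0 (by omega)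
    have e2 : c'.support.tail[(c'.length - 2)]'(by omega) = y := by
      have h5 := hgetT (c'.length - 2) (by omega)
      rw [hydef, show c'.length - 1 = c'.length - 2 + 1 by omega]
      exact h5
    have : (0 : ℕ) = c'.length - 2 := by
      apply htail.getElem_inj_iff.1
      rw [e0, e2, heq]
    omega
  -- now the depth contradiction
  have hxc : x ∈ c.support := hsub x (hmem 1 (by omega))
  have hyc : y ∈ c.support := hsub y (hmem (c'.length - 1) (by omega))
  rcases adjx with ⟨hur, hfu⟩ | ⟨hxr, hfx⟩
  · rcases adjy with ⟨hyr, hfy⟩ | ⟨hur2, hfu2⟩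
    · -- F y = u, y ≠ r : dep y = dep u + 1 > dep u, contradiction
      have := dep_parent r h3 hyr
      rw [hfy] at this
      have := hmax y hyc
      omega
    · exact hxy (hfu ▸ hfu2 ▸ rfl)
  · have := dep_parent r h3 hxr
    rw [hfx] at this
    have := hmax x hxc
    omega


lemma funcG_isTree (r : W) (F : W → W) (h3 : ∀ w, ∃ n, F^[n] w = r) :
    (funcG r F h3).IsTree :=
  ⟨funcG_connected r F h3, funcG_acyclic r F h3⟩

/-- transfer `IsTree` along a graph isomorphism -/
lemma isTree_of_iso {A B : Type*} {G1 : SimpleGraph A} {G2 : SimpleGraph B}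
    (e : G1 ≃g G2) (h : G2.IsTree) : G1.IsTree := by
  constructor
  · haveI : Nonempty B := h.1.nonempty
    haveI : Nonempty A := ⟨e.symm (Classical.arbitrary B)⟩
    constructor
    intro a b
    have := (h.1.preconnected (e a) (e b)).map e.symm.toHom
    simpa using this
  · intro v c hc
    exact h.2 (c.map e.toHom) (hc.map e.injective)

variable (Γ : SimpleGraph W) (r : W)

def funcSubgraph (F : W → W) (h2 : ∀ w, w ≠ r → Γ.Adj w (F w)) : Γ.Subgraph where
  verts := Set.univ
  Adj := funcAdj r F
  adj_sub := by
    rintro x y (⟨hx, he⟩ | ⟨hy, he⟩)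
    · exact he ▸ h2 x hx
    · exact (he ▸ h2 y hy).symm
  edge_vert := fun _ => trivial
  symm := ⟨fun _ _ h => funcAdj_symm h⟩

lemma funcSubgraph_isSpanning (F : W → W) (h2 : ∀ w, w ≠ r → Γ.Adj w (F w)) :
    (funcSubgraph Γ r F h2).IsSpanning := fun _ => trivial

def funcSubgraphIso (F : W → W) (h2 : ∀ w, w ≠ r → Γ.Adj w (F w))
    (h3 : ∀ w, ∃ n, F^[n] w = r) :
    (funcSubgraph Γ r F h2).coe ≃g funcG r F h3 where
  toEquiv := Equiv.Set.univ W
  map_rel_iff' := Iff.rfl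

lemma funcSubgraph_coe_isTree (F : W → W) (h2 : ∀ w, w ≠ r → Γ.Adj w (F w))
    (h3 : ∀ w, ∃ n, F^[n] w = r) : (funcSubgraph Γ r F h2).coe.IsTree :=
  isTree_of_iso (funcSubgraphIso Γ r F h2 h3) (funcG_isTree r F h3)


section PathTo

variable {H : Γ.Subgraph} (hs : H.IsSpanning) (ht : H.coe.IsTree)

noncomputable def pathTo (w : W) : H.coe.Walk ⟨w, hs w⟩ ⟨r, hs r⟩ :=
  (ht.existsUnique_path ⟨w, hs w⟩ ⟨r, hs r⟩).choose

lemma pathTo_isPath (w : W) : (pathTo Γ r hs ht w).IsPath :=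
  (ht.existsUnique_path ⟨w, hs w⟩ ⟨r, hs r⟩).choose_spec.1

lemma pathTo_unique {w : W} (q : H.coe.Walk ⟨w, hs w⟩ ⟨r, hs r⟩) (hq : q.IsPath) :
    q = pathTo Γ r hs ht w :=
  (ht.existsUnique_path ⟨w, hs w⟩ ⟨r, hs r⟩).choose_spec.2 q hq

open scoped Classical in
noncomputable def parentFn (w : W) : W :=
  if h : w = r then r else ((pathTo Γ r hs ht w).getVert 1).1

lemma parentFn_r : parentFn Γ r hs ht r = r := dif_pos rfl

lemma pathTo_not_nil {w : W} (hw : w ≠ r) : ¬ (pathTo Γ r hs ht w).Nil :=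
  SimpleGraph.Walk.not_nil_of_ne (fun hc => hw (congrArg Subtype.val hc))

lemma parentFn_eq {w : W} (hw : w ≠ r) :
    parentFn Γ r hs ht w = ((pathTo Γ r hs ht w).getVert 1).1 := dif_neg hw

lemma parentFn_adj {w : W} (hw : w ≠ r) : H.Adj w (parentFn Γ r hs ht w) := by
  have hnn := pathTo_not_nil Γ r hs ht hw
  have hlen : 0 < (pathTo Γ r hs ht w).length :=
    SimpleGraph.Walk.not_nil_iff_lt_length.1 hnn
  have hadj := (pathTo Γ r hs ht w).adj_getVert_succ (i := 0) hlen
  rw [SimpleGraph.Walk.getVert_zero] at hadj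
  rw [parentFn_eq Γ r hs ht hw]
  exact hadj

lemma parentFn_length {w : W} (hw : w ≠ r) :
    (pathTo Γ r hs ht (parentFn Γ r hs ht w)).length + 1 = (pathTo Γ r hs ht w).length := by
  have hnn := pathTo_not_nil Γ r hs ht hw
  have hEq : (pathTo Γ r hs ht w).getVert 1 = ⟨parentFn Γ r hs ht w, hs _⟩ :=
    Subtype.ext (parentFn_eq Γ r hs ht hw).symm
  set q := ((pathTo Γ r hs ht w).tail.copy hEq rfl) with hq
  have hqp : q.IsPath := by
    rw [hq, SimpleGraph.Walk.isPath_copy]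
    exact (pathTo_isPath Γ r hs ht w).tail
  have := pathTo_unique Γ r hs ht q hqp
  rw [← this, hq, SimpleGraph.Walk.length_copy]
  exact SimpleGraph.Walk.length_tail_add_one hnn

lemma parentFn_reach (w : W) : ∃ n, (parentFn Γ r hs ht)^[n] w = r := by
  have key : ∀ n w, (pathTo Γ r hs ht w).length ≤ n → ∃ m, (parentFn Γ r hs ht)^[m] w = r := by
    intro n
    induction n with
    | zero =>
      intro w hw
      have hnil : (pathTo Γ r hs ht w).Nil := by
        rw [SimpleGraph.Walk.nil_iff_length_eq]
        omega
      have := hnil.eq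
      exact ⟨0, congrArg Subtype.val this⟩
    | succ n ih =>
      intro w hw
      by_cases hwr : w = r
      · exact ⟨0, hwr⟩
      · have := parentFn_length Γ r hs ht hwr
        obtain ⟨m, hm⟩ := ih (parentFn Γ r hs ht w) (by omega)
        exact ⟨m + 1, by rw [Function.iterate_succ_apply]; exact hm⟩
  exact key _ w le_rfl

end PathTo

section WalkAux

lemma walk_getVert_map {A B : Type*} {G1 : SimpleGraph A} {G2 : SimpleGraph B}
    (f : G1 →g G2) {u v : A} (p : G1.Walk u v) (i : ℕ) :
    (p.map f).getVert i = f (p.getVert i) := by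
  induction p generalizing i with
  | nil => rfl
  | cons h q ih =>
    match i with
    | 0 => simp
    | (n+1) =>
      rw [SimpleGraph.Walk.map_cons, SimpleGraph.Walk.getVert_cons_succ,
        SimpleGraph.Walk.getVert_cons_succ]
      exact ih n

variable {r : W} {F : W → W} (h3 : ∀ w, ∃ n, F^[n] w = r)

open scoped Classical in
noncomputable def walkAux : (n : ℕ) → (w : W) → F^[n] w = r → (funcG r F h3).Walk w r
  | 0, w, h => SimpleGraph.Walk.nil.copy (show r = w by rw [Function.iterate_zero_apply] at h; exact h.symm) rfl
  | (n+1), w, h =>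
    if hw : w = r then SimpleGraph.Walk.nil.copy hw.symm rfl
    else SimpleGraph.Walk.cons (show (funcG r F h3).Adj w (F w) from Or.inl ⟨hw, rfl⟩)
      (walkAux n (F w) (by rwa [Function.iterate_succ_apply] at h))

lemma walkAux_support : ∀ (n : ℕ) (w : W) (h : F^[n] w = r) (y : W),
    y ∈ (walkAux h3 n w h).support → ∃ t, F^[t] w = y := by
  intro n
  induction n with
  | zero =>
    intro w h y hy
    unfold walkAux at hy
    rw [SimpleGraph.Walk.support_copy, SimpleGraph.Walk.support_nil] at hy
    rcases List.mem_singleton.1 hy with rfl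
    exact ⟨0, by simpa using h⟩
  | succ n ih =>
    intro w h y hy
    unfold walkAux at hy
    by_cases hw : w = r
    · rw [dif_pos hw, SimpleGraph.Walk.support_copy, SimpleGraph.Walk.support_nil] at hy
      rcases List.mem_singleton.1 hy with rfl
      exact ⟨0, by simpa using hw⟩
    · rw [dif_neg hw, SimpleGraph.Walk.support_cons] at hy
      rcases List.mem_cons.1 hy with rfl | hy'
      · exact ⟨0, rfl⟩
      · obtain ⟨t, hts⟩ := ih (F w) (by rwa [Function.iterate_succ_apply] at h) y hy'
        exact ⟨t + 1, by rwa [Function.iterate_succ_apply]⟩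

lemma walkAux_isPath (h1 : F r = r) : ∀ (n : ℕ) (w : W) (h : F^[n] w = r),
    (walkAux h3 n w h).IsPath := by
  intro n
  induction n with
  | zero =>
    intro w h
    unfold walkAux
    rw [SimpleGraph.Walk.isPath_copy]
    exact SimpleGraph.Walk.IsPath.nil
  | succ n ih =>
    intro w h
    unfold walkAux
    by_cases hw : w = r
    · rw [dif_pos hw, SimpleGraph.Walk.isPath_copy]
      exact SimpleGraph.Walk.IsPath.nil
    · rw [dif_neg hw]
      apply (ih (F w) _).cons
      intro hmem
      obtain ⟨t, hts⟩ := walkAux_support h3 n (F w) _ w hmem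
      have hper : F^[t+1] w = w := by rwa [Function.iterate_succ_apply]
      obtain ⟨s, hss⟩ := h3 w
      exact cyclic_not_reach' h1 hw (by omega) hper hss

lemma walkAux_getVert1 : ∀ (n : ℕ) (w : W) (h : F^[n] w = r) (hw : w ≠ r),
    (walkAux h3 n w h).getVert 1 = F w := by
  intro n
  match n with
  | 0 =>
    intro w h hw
    exact absurd (by simpa using h) hw
  | (n+1) =>
    intro w h hw
    unfold walkAux
    rw [dif_neg hw, SimpleGraph.Walk.getVert_cons_succ, SimpleGraph.Walk.getVert_zero]

end WalkAux

/-- The main correspondence: spanning trees of `Γ` are in bijection with rooted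
acyclic parent-functions compatible with `Γ`. -/
noncomputable def spanningTreeEquiv :
    {H : Γ.Subgraph // H.IsSpanning ∧ H.coe.IsTree} ≃
    {F : W → W // F r = r ∧ (∀ w, w ≠ r → Γ.Adj w (F w)) ∧ ∀ w, ∃ n, F^[n] w = r} where
  toFun HH := ⟨parentFn Γ r HH.2.1 HH.2.2, parentFn_r Γ r HH.2.1 HH.2.2,
    fun w hw => HH.1.adj_sub (parentFn_adj Γ r HH.2.1 HH.2.2 hw),
    parentFn_reach Γ r HH.2.1 HH.2.2⟩
  invFun FF := ⟨funcSubgraph Γ r FF.1 FF.2.2.1,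
    funcSubgraph_isSpanning Γ r FF.1 FF.2.2.1,
    funcSubgraph_coe_isTree Γ r FF.1 FF.2.2.1 FF.2.2.2⟩
  left_inv := by
    classical
    rintro ⟨H, hs, ht⟩
    apply Subtype.ext
    dsimp only
    ext x y
    · constructor
      · intro _; exact hs x
      · intro _; exact trivial
    · show funcAdj r (parentFn Γ r hs ht) x y ↔ H.Adj x y
      constructor
      · rintro (⟨hx, he⟩ | ⟨hy, he⟩)
        · exact he ▸ parentFn_adj Γ r hs ht hx
        · exact (he ▸ parentFn_adj Γ r hs ht hy).symm
      · intro hadj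
        have hxy : x ≠ y := hadj.ne
        have hab : H.coe.Adj ⟨x, hs x⟩ ⟨y, hs y⟩ := hadj
        by_cases hxr : x = r
        · -- y is a child of the root x = r
          refine Or.inr ⟨fun hyr => hxy (hxr.trans hyr.symm), ?_⟩
          have hne : (⟨y, hs y⟩ : H.verts) ≠ ⟨x, hs x⟩ := by
            intro hc
            exact hxy (congrArg Subtype.val hc).symm
          set W1 : H.coe.Walk ⟨y, hs y⟩ ⟨r, hs r⟩ :=
            (SimpleGraph.Walk.cons hab.symm SimpleGraph.Walk.nil).copy rfl
              (by rw [hxr]) with hW1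
          have hW1p : W1.IsPath := by
            rw [hW1, SimpleGraph.Walk.isPath_copy]
            apply SimpleGraph.Walk.IsPath.nil.cons
            simpa using hne
          have := pathTo_unique Γ r hs ht W1 hW1p
          rw [parentFn_eq Γ r hs ht (fun hyr => hxy (hxr.trans hyr.symm)), ← this, hW1,
            SimpleGraph.Walk.getVert_copy, SimpleGraph.Walk.getVert_cons_succ,
            SimpleGraph.Walk.getVert_zero]
        · by_cases hb : (⟨y, hs y⟩ : H.verts) ∈ (pathTo Γ r hs ht x).support
          · -- y on the path from x: then parent x = y
            refine Or.inl ⟨hxr, ?_⟩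
            set P := pathTo Γ r hs ht x with hP
            have hq : (P.takeUntil _ hb).IsPath :=
              (pathTo_isPath Γ r hs ht x).takeUntil hb
            have hsingle : (SimpleGraph.Walk.cons hab SimpleGraph.Walk.nil).IsPath := by
              apply SimpleGraph.Walk.IsPath.nil.cons
              simp only [SimpleGraph.Walk.support_nil, List.mem_singleton]
              intro hc
              exact hxy (congrArg Subtype.val hc)
            have huniq : P.takeUntil _ hb = SimpleGraph.Walk.cons hab SimpleGraph.Walk.nil := by
              have := ht.2.path_unique ⟨P.takeUntil _ hb, hq⟩
                ⟨SimpleGraph.Walk.cons hab SimpleGraph.Walk.nil, hsingle⟩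
              exact congrArg Subtype.val this
            have hspec := P.take_spec hb
            rw [huniq] at hspec
            rw [parentFn_eq Γ r hs ht hxr, ← hP, ← hspec,
              SimpleGraph.Walk.cons_append, SimpleGraph.Walk.getVert_cons_succ,
              SimpleGraph.Walk.nil_append, SimpleGraph.Walk.getVert_zero]
          · -- y not on the path from x: then parent y = x
            have hyr : y ≠ r := by
              intro hyr
              apply hb
              have : (⟨y, hs y⟩ : H.verts) = ⟨r, hs r⟩ := Subtype.ext hyr
              rw [this]
              exact SimpleGraph.Walk.end_mem_support _
            refine Or.inr ⟨hyr, ?_⟩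
            set Q : H.coe.Walk ⟨y, hs y⟩ ⟨r, hs r⟩ :=
              SimpleGraph.Walk.cons hab.symm (pathTo Γ r hs ht x) with hQ
            have hQp : Q.IsPath := by
              rw [hQ]
              exact (pathTo_isPath Γ r hs ht x).cons hb
            have := pathTo_unique Γ r hs ht Q hQp
            rw [parentFn_eq Γ r hs ht hyr, ← this, hQ,
              SimpleGraph.Walk.getVert_cons_succ, SimpleGraph.Walk.getVert_zero]
  right_inv := by
    rintro ⟨F, h1, h2, h3⟩
    apply Subtype.ext
    dsimp only
    funext w
    set H := funcSubgraph Γ r F h2 with hH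
    set hs := funcSubgraph_isSpanning Γ r F h2
    set ht := funcSubgraph_coe_isTree Γ r F h2 h3
    by_cases hw : w = r
    · rw [hw, parentFn_r, h1]
    · obtain ⟨n, hn⟩ := h3 w
      set ι := (funcSubgraphIso Γ r F h2 h3).symm with hι
      have hmp : ((walkAux h3 n w hn).map ι.toHom).IsPath :=
        SimpleGraph.Walk.map_isPath_of_injective ι.injective (walkAux_isPath h3 h1 n w hn)
      have huniq := pathTo_unique Γ r hs ht ((walkAux h3 n w hn).map ι.toHom) hmp
      rw [parentFn_eq Γ r hs ht hw, ← huniq]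
      have e := walk_getVert_map ι.toHom (walkAux h3 n w hn) 1
      rw [walkAux_getVert1 h3 n w hn hw] at e
      exact (congrArg Subtype.val e).trans rfl
end TreeFn

section Decomp

open SimpleGraph

variable {G : Type*} [Group G] [Finite G]

lemma adj_one {g : G} (hg : g ≠ 1) : (powerGraph G).Adj g 1 :=
  And.intro hg (Or.inr (Subgroup.one_mem _))

lemma pp_adj_iff {u v : {g : G // g ≠ 1}} :
    (properPowerGraph G).Adj u v ↔ (powerGraph G).Adj u.1 v.1 := Iff.rfl

lemma adj_char
    (hcl : ∀ c : (properPowerGraph G).ConnectedComponent,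
      (properPowerGraph G).IsClique c.supp)
    {g : G} (hg : g ≠ 1) (u : G) :
    (powerGraph G).Adj g u ↔ (u ≠ g ∧ (u = 1 ∨ ∃ hu : u ≠ 1,
      (properPowerGraph G).connectedComponentMk ⟨u, hu⟩ =
        (properPowerGraph G).connectedComponentMk ⟨g, hg⟩)) := by
  constructor
  · intro ha
    refine ⟨ha.ne.symm, ?_⟩
    by_cases hu : u = 1
    · exact Or.inl hu
    · refine Or.inr ⟨hu, ?_⟩
      apply SimpleGraph.ConnectedComponent.sound
      have : (properPowerGraph G).Adj ⟨u, hu⟩ ⟨g, hg⟩ := pp_adj_iff.2 ha.symm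
      exact this.reachable
  · rintro ⟨hne, rfl | ⟨hu, hcomp⟩⟩
    · exact adj_one hg
    · have hmemu : (⟨u, hu⟩ : {g : G // g ≠ 1}) ∈
          ((properPowerGraph G).connectedComponentMk ⟨g, hg⟩).supp := by
        rw [SimpleGraph.ConnectedComponent.mem_supp_iff]
        exact hcomp
      have hmemg : (⟨g, hg⟩ : {g : G // g ≠ 1}) ∈
          ((properPowerGraph G).connectedComponentMk ⟨g, hg⟩).supp := by
        rw [SimpleGraph.ConnectedComponent.mem_supp_iff]
      have hnesub : (⟨u, hu⟩ : {g : G // g ≠ 1}) ≠ ⟨g, hg⟩ := by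
        intro hc
        exact hne (congrArg Subtype.val hc)
      have := hcl _ hmemu hmemg hnesub
      exact (pp_adj_iff.1 this).symm

def Bset (c : (properPowerGraph G).ConnectedComponent) : Set G :=
  insert 1 (Subtype.val '' c.supp)

lemma one_mem_Bset (c : (properPowerGraph G).ConnectedComponent) : (1 : G) ∈ Bset c :=
  Set.mem_insert _ _

lemma mem_Bset {c : (properPowerGraph G).ConnectedComponent} {x : G} :
    x ∈ Bset c ↔ x = 1 ∨ ∃ hx : x ≠ 1,
      (properPowerGraph G).connectedComponentMk ⟨x, hx⟩ = c := by
  unfold Bset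
  rw [Set.mem_insert_iff]
  constructor
  · rintro (h | ⟨v, hv, rfl⟩)
    · exact Or.inl h
    · exact Or.inr ⟨v.2, by
        rw [← SimpleGraph.ConnectedComponent.mem_supp_iff]
        exact hv⟩
  · rintro (h | ⟨hx, hcomp⟩)
    · exact Or.inl h
    · exact Or.inr ⟨⟨x, hx⟩, by
        rw [SimpleGraph.ConnectedComponent.mem_supp_iff]
        exact hcomp, rfl⟩

/-- Each block is the underlying set of a maximal cyclic subgroup. -/
lemma Bset_eq_zpowers
    (hcl : ∀ c : (properPowerGraph G).ConnectedComponent,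
      (properPowerGraph G).IsClique c.supp)
    (c : (properPowerGraph G).ConnectedComponent) :
    ∃ z : G, z ≠ 1 ∧ Bset c = (Subgroup.zpowers z : Set G) := by
  obtain ⟨v0, hv0⟩ := c.exists_rep
  have hne : c.supp.Nonempty := ⟨v0, by rw [SimpleGraph.ConnectedComponent.mem_supp_iff]; exact hv0⟩
  obtain ⟨z, hzS, hmax⟩ := Set.exists_max_image c.supp (fun v => orderOf (v.1 : G))
    (Set.toFinite _) hne
  have key : ∀ x ∈ c.supp, (x : {g : G // g ≠ 1}).1 ∈ Subgroup.zpowers z.1 := by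
    intro x hxS
    by_cases hxz : x = z
    · rw [hxz]; exact Subgroup.mem_zpowers _
    · have hadj := hcl c hxS hzS hxz
      rcases And.right (pp_adj_iff.1 hadj) with h | h
      · exact h
      · -- z ∈ zpowers x, so orders equal, so zpowers equal
        have hdvd : orderOf z.1 ∣ orderOf x.1 := orderOf_dvd_of_mem_zpowers h
        have hle2 : orderOf z.1 ≤ orderOf x.1 :=
          Nat.le_of_dvd (orderOf_pos x.1) hdvd
        have heq : orderOf x.1 = orderOf z.1 := le_antisymm (hmax x hxS) hle2
        have hsub : Subgroup.zpowers z.1 ≤ Subgroup.zpowers x.1 := Subgroup.zpowers_le.2 h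
        have hcard : Nat.card (Subgroup.zpowers x.1) ≤ Nat.card (Subgroup.zpowers z.1) := by
          rw [Nat.card_zpowers, Nat.card_zpowers, heq]
        have heqsub := Subgroup.eq_of_le_of_card_ge hsub hcard
        rw [heqsub]
        exact Subgroup.mem_zpowers _
  refine ⟨z.1, z.2, ?_⟩
  ext x
  rw [mem_Bset]
  constructor
  · rintro (rfl | ⟨hx, hcomp⟩)
    · exact Subgroup.one_mem _
    · apply key ⟨x, hx⟩
      rw [SimpleGraph.ConnectedComponent.mem_supp_iff]
      exact hcomp
  · intro hx
    by_cases hx1 : x = 1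
    · exact Or.inl hx1
    · refine Or.inr ⟨hx1, ?_⟩
      by_cases hxz : x = z.1
      · have : (⟨x, hx1⟩ : {g : G // g ≠ 1}) = z := Subtype.ext hxz
        rw [this]
        rw [← SimpleGraph.ConnectedComponent.mem_supp_iff]
        exact hzS
      · have hadj : (properPowerGraph G).Adj ⟨x, hx1⟩ z := pp_adj_iff.2 (And.intro hxz (Or.inl hx))
        have h1 := SimpleGraph.ConnectedComponent.sound hadj.reachable
        have h2 : (properPowerGraph G).connectedComponentMk z = c := by
          rw [← SimpleGraph.ConnectedComponent.mem_supp_iff]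
          exact hzS
        exact h1.trans h2

lemma restrict_iterate {α : Type*} {S : Set α} {F : α → α} (hS : ∀ x ∈ S, F x ∈ S) :
    ∀ (n : ℕ) (v : ↥S), (((fun x : ↥S => (⟨F x.1, hS x.1 x.2⟩ : ↥S))^[n] v) : α) = F^[n] v.1 := by
  intro n
  induction n with
  | zero => intro v; rfl
  | succ n ih =>
    intro v
    rw [Function.iterate_succ_apply, Function.iterate_succ_apply]
    exact ih _

lemma Bset_closed
    (hcl : ∀ c : (properPowerGraph G).ConnectedComponent,
      (properPowerGraph G).IsClique c.supp)
    {F : G → G} (hF1 : F 1 = 1)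
    (hadj : ∀ g, g ≠ 1 → (powerGraph G).Adj g (F g))
    {c : (properPowerGraph G).ConnectedComponent} :
    ∀ x ∈ Bset c, F x ∈ Bset c := by
  intro x hx
  by_cases hx1 : x = 1
  · rw [hx1, hF1]; exact one_mem_Bset c
  · obtain ⟨hx', hcomp⟩ := (mem_Bset.1 hx).resolve_left hx1
    have ha := (adj_char hcl hx1 (F x)).1 (hadj x hx1)
    rcases ha.2 with h | ⟨hFx, hcomp2⟩
    · rw [h]; exact one_mem_Bset c
    · rw [mem_Bset]
      exact Or.inr ⟨hFx, hcomp2.trans hcomp⟩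

/-- the root of a block -/
def rC (c : (properPowerGraph G).ConnectedComponent) : ↥(Bset c) := ⟨1, one_mem_Bset c⟩

variable (hcl : ∀ c : (properPowerGraph G).ConnectedComponent,
      (properPowerGraph G).IsClique c.supp)

open scoped Classical in
noncomputable def glueFn
    (q : Π c : (properPowerGraph G).ConnectedComponent,
      {f : ↥(Bset c) → ↥(Bset c) // f (rC c) = rC c ∧ ∀ v, ∃ n, f^[n] v = rC c}) :
    G → G := fun g =>
  if hg : g = 1 then 1
  else ((q ((properPowerGraph G).connectedComponentMk ⟨g, hg⟩)).1
    ⟨g, mem_Bset.2 (Or.inr ⟨hg, rfl⟩)⟩).1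

lemma glueFn_one (q : Π c : (properPowerGraph G).ConnectedComponent,
      {f : ↥(Bset c) → ↥(Bset c) // f (rC c) = rC c ∧ ∀ v, ∃ n, f^[n] v = rC c}) :
    glueFn q 1 = 1 := dif_pos rfl

lemma glueFn_val (q : Π c : (properPowerGraph G).ConnectedComponent,
      {f : ↥(Bset c) → ↥(Bset c) // f (rC c) = rC c ∧ ∀ v, ∃ n, f^[n] v = rC c})
    {c : (properPowerGraph G).ConnectedComponent} (v : ↥(Bset c)) :
    glueFn q v.1 = ((q c).1 v).1 := by
  by_cases hv : v.1 = 1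
  · have hvr : v = rC c := Subtype.ext hv
    rw [hvr]
    show glueFn q 1 = _
    rw [glueFn_one, (q c).2.1]
    rfl
  · have := (mem_Bset.1 v.2).resolve_left hv
    obtain ⟨hx, hcomp⟩ := this
    have tr : ∀ (c' : (properPowerGraph G).ConnectedComponent) (h : c' = c)
        (hm : v.1 ∈ Bset c'), ((q c').1 ⟨v.1, hm⟩).1 = ((q c).1 v).1 := by
      rintro c' rfl hm
      exact congrArg (fun t => ((q c').1 t).1) (Subtype.ext rfl)
    unfold glueFn
    rw [dif_neg hv]
    exact tr _ hcomp _

lemma glueFn_iter (q : Π c : (properPowerGraph G).ConnectedComponent,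
      {f : ↥(Bset c) → ↥(Bset c) // f (rC c) = rC c ∧ ∀ v, ∃ n, f^[n] v = rC c})
    {c : (properPowerGraph G).ConnectedComponent} :
    ∀ (n : ℕ) (v : ↥(Bset c)), (glueFn q)^[n] v.1 = (((q c).1)^[n] v).1 := by
  intro n
  induction n with
  | zero => intro v; rfl
  | succ n ih =>
    intro v
    rw [Function.iterate_succ_apply, Function.iterate_succ_apply, glueFn_val q v]
    exact ih ((q c).1 v)

lemma glueFn_no_fix (q : Π c : (properPowerGraph G).ConnectedComponent,
      {f : ↥(Bset c) → ↥(Bset c) // f (rC c) = rC c ∧ ∀ v, ∃ n, f^[n] v = rC c})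
    {c : (properPowerGraph G).ConnectedComponent} (v : ↥(Bset c)) (hv : v.1 ≠ 1) :
    (q c).1 v ≠ v := by
  intro hfix
  obtain ⟨n, hn⟩ := (q c).2.2 v
  rw [Function.iterate_fixed hfix n] at hn
  exact hv (congrArg Subtype.val hn)

noncomputable def decompEquiv :
    {F : G → G // F 1 = 1 ∧ (∀ g, g ≠ 1 → (powerGraph G).Adj g (F g)) ∧
      ∀ g, ∃ n, F^[n] g = 1} ≃
    Π c : (properPowerGraph G).ConnectedComponent,
      {f : ↥(Bset c) → ↥(Bset c) // f (rC c) = rC c ∧ ∀ v, ∃ n, f^[n] v = rC c} where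
  toFun FF c := ⟨fun v => ⟨FF.1 v.1, Bset_closed hcl FF.2.1 FF.2.2.1 v.1 v.2⟩,
    Subtype.ext FF.2.1,
    by
      intro v
      obtain ⟨n, hn⟩ := FF.2.2.2 v.1
      refine ⟨n, Subtype.ext ?_⟩
      rw [restrict_iterate (Bset_closed hcl FF.2.1 FF.2.2.1) n v]
      exact hn⟩
  invFun q := ⟨glueFn q, glueFn_one q, by
      intro g hg
      set c := (properPowerGraph G).connectedComponentMk ⟨g, hg⟩ with hc
      set vg : ↥(Bset c) := ⟨g, mem_Bset.2 (Or.inr ⟨hg, rfl⟩)⟩ with hvg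
      have hval : glueFn q g = ((q c).1 vg).1 := glueFn_val q vg
      rw [adj_char hcl hg]
      constructor
      · rw [hval]
        intro hfix
        exact glueFn_no_fix q vg hg (Subtype.ext hfix)
      · have hmem := ((q c).1 vg).2
        rcases mem_Bset.1 hmem with h | ⟨hu, hcomp⟩
        · exact Or.inl (by rw [hval]; exact h)
        · refine Or.inr ⟨by rw [hval]; exact hu, ?_⟩
          have : (⟨glueFn q g, by rw [hval]; exact hu⟩ : {g : G // g ≠ 1}) =
              ⟨((q c).1 vg).1, hu⟩ := Subtype.ext hval
          rw [this]
          exact hcomp,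
    by
      intro g
      by_cases hg : g = 1
      · exact ⟨0, hg⟩
      · set c := (properPowerGraph G).connectedComponentMk ⟨g, hg⟩ with hc
        set vg : ↥(Bset c) := ⟨g, mem_Bset.2 (Or.inr ⟨hg, rfl⟩)⟩ with hvg
        obtain ⟨n, hn⟩ := (q c).2.2 vg
        refine ⟨n, ?_⟩
        have := glueFn_iter q n vg
        rw [hn] at this
        exact this⟩
  left_inv := by
    rintro ⟨F, h1, h2, h3⟩
    apply Subtype.ext
    funext g
    dsimp only
    by_cases hg : g = 1
    · rw [hg, glueFn_one, h1]
    · unfold glueFn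
      rw [dif_neg hg]
  right_inv := by
    intro q
    funext c
    apply Subtype.ext
    funext v
    apply Subtype.ext
    show glueFn q v.1 = ((q c).1 v).1
    exact glueFn_val q v

end Decomp

/-- If `G` is a finite `p`-group all of whose proper power graph components are
cliques, then the set of prime divisors of `κ(G)` is exactly `{p}`
(assuming `κ(G) > 1`). -/
theorem primeFactors_treeNumber_eq (G : Type*) [Group G] [Finite G] (p : ℕ)
    (hp : p.Prime) (hG : ∀ g : G, ∃ n : ℕ, orderOf g = p ^ n)
    (hcl : ∀ c : (properPowerGraph G).ConnectedComponent,
      (properPowerGraph G).IsClique c.supp)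
    (h1 : 1 < (powerGraph G).treeNumber) :
    ((powerGraph G).treeNumber).primeFactors = {p} := by
  classical
  haveI : Fintype G := Fintype.ofFinite G
  haveI : Fintype ((properPowerGraph G).ConnectedComponent) := Fintype.ofFinite _
  have hκ : (powerGraph G).treeNumber =
      ∏ c : (properPowerGraph G).ConnectedComponent,
        Nat.card {f : ↥(Bset c) → ↥(Bset c) // f (rC c) = rC c ∧ ∀ v, ∃ n, f^[n] v = rC c} := by
    rw [SimpleGraph.treeNumber, Nat.card_congr (spanningTreeEquiv (powerGraph G) (1 : G)),
      Nat.card_congr (decompEquiv hcl), Nat.card_pi]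
  -- each factor divides a power of p
  have hfac : ∀ c : (properPowerGraph G).ConnectedComponent, ∃ j : ℕ,
      Nat.card {f : ↥(Bset c) → ↥(Bset c) // f (rC c) = rC c ∧ ∀ v, ∃ n, f^[n] v = rC c} ∣
        p ^ j := by
    intro c
    obtain ⟨z, hz1, hzB⟩ := Bset_eq_zpowers hcl c
    obtain ⟨k, hk⟩ := hG z
    haveI : Fintype ↥(Bset c) := Fintype.ofFinite _
    letI : LinearOrder ↥(Bset c) :=
      LinearOrder.lift' (Fintype.equivFin ↥(Bset c)) (Equiv.injective _)
    have hcard : Fintype.card ↥(Bset c) = p ^ k := by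
      rw [← Nat.card_eq_fintype_card]
      rw [show (Bset c : Set G) = (Subgroup.zpowers z : Set G) from hzB]
      rw [← hk]
      exact Nat.card_zpowers z
    have hjoy := joyal_card (rC c)
    refine ⟨k * (Fintype.card ↥(Bset c) - 1), ?_⟩
    have hdvd : Nat.card {f : ↥(Bset c) → ↥(Bset c) //
        f (rC c) = rC c ∧ ∀ v, ∃ n, f^[n] v = rC c} ∣
        Fintype.card ↥(Bset c) ^ (Fintype.card ↥(Bset c) - 1) := ⟨_, hjoy.symm⟩
    rw [hcard] at hdvd ⊢
    rwa [← pow_mul] at hdvd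
  choose jfun hjfun using hfac
  have hκdvd : (powerGraph G).treeNumber ∣ p ^ (∑ c, jfun c) := by
    rw [hκ, ← Finset.prod_pow_eq_pow_sum]
    exact Finset.prod_dvd_prod_of_dvd _ _ (fun c _ => hjfun c)
  obtain ⟨j, hjle, hj⟩ := (Nat.dvd_prime_pow hp).1 hκdvd
  have hj0 : j ≠ 0 := by
    rintro rfl
    rw [hj] at h1
    simp at h1
  rw [hj]
  exact Nat.primeFactors_prime_pow hj0 hp
end
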